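/- arXiv:math/0505689 — 5 statements merged into one kernel-verified Lean document; each statement's English description precedes it below -/
import Mathlib

section
/- Let M and N be finite matroids on disjoint ground sets, with rank functions r_M and r_N. Let Z' = { X : X is a cyclic flat of M with X ≠ E(M) } ∪ { E(M) ∪ Y : Y is a cyclic flat of N with Y ≠ ∅ }, and let Z = Z' ∪ {E(M)} if M has no coloops and N has no loops, and Z = Z' otherwise. Then there exists a matroid P on E(M) ∪ E(N) whose collection of cyclic flats is exactly Z, with r_P(X) = r_M(X) for each cyclic flat X of M with X ≠ E(M) (and for E(M) itself when E(M) ∈ Z), and r_P(E(M) ∪ Y) = r_M(E(M)) + r_N(Y) for each nonempty cyclic flat Y of N. -/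
namespace Matroid

variable {α β : Type*}

/-- A circuit of a matroid: a minimal dependent set. -/
def IsCircuit' (M : Matroid α) (C : Set α) : Prop :=
  M.Dep C ∧ ∀ D, D ⊂ C → M.Indep D

/-- A cyclic flat: a flat that is a (possibly empty) union of circuits. -/
def CyclicFlat (M : Matroid α) (X : Set α) : Prop :=
  M.IsFlat X ∧ ∀ e ∈ X, ∃ C, M.IsCircuit' C ∧ C ⊆ X ∧ e ∈ C

/-- The rank of a set: the maximum size of an independent subset. -/
noncomputable def rk (M : Matroid α) (X : Set α) : ℕ :=
  sSup {n | ∃ I, M.Indep I ∧ I ⊆ X ∧ I.ncard = n}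

/-- Deletion of a set from a matroid. -/
def del (M : Matroid α) (D : Set α) : Matroid α := M ↾ (M.E \ D)

/-- Contraction of a set in a matroid. -/
def con (M : Matroid α) (C : Set α) : Matroid α := (M✶ ↾ (M.E \ C))✶

/-- `N` is a minor of `M` if it is obtained from `M` by a contraction and a deletion. -/
def IsMinorOf (N M : Matroid α) : Prop := ∃ C D, N = (M.con C).del D

/-- Matroid isomorphism: a bijection of ground sets preserving independence. -/
def IsIsoTo (M : Matroid α) (N : Matroid β) : Prop :=
  ∃ e : M.E ≃ N.E, ∀ I : Set M.E,
    M.Indep (Subtype.val '' I) ↔ N.Indep (Subtype.val '' (e '' I))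

end Matroid

namespace Matroid

set_option linter.unusedSectionVars false
set_option linter.unusedVariables false
set_option linter.unnecessarySimpa false

variable {α : Type*}
variable {M N : Matroid α} {I J X Y S A F B C D : Set α} {e f : α}


variable {α : Type*}


variable {M : Matroid α} {I J X Y S F B C : Set α} {e f : α}

lemma ncard_le_of_basis' [M.Finite] (hI : M.IsBasis' I X) (hJ : M.Indep J) (hJX : J ⊆ X) :
    J.ncard ≤ I.ncard := by
  have hIb : (M ↾ X).IsBase I := isBase_restrict_iff'.2 hI
  have hJi : (M ↾ X).Indep J := restrict_indep_iff.2 ⟨hJ, hJX⟩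
  obtain ⟨B, hB, hJB⟩ := hJi.exists_isBase_superset
  have hBI : B.ncard = I.ncard := hB.ncard_eq_ncard_of_isBase hIb
  have hBfin : B.Finite := M.set_finite B (hB.indep.of_restrict.subset_ground)
  exact le_trans (Set.ncard_le_ncard hJB hBfin) hBI.le

lemma rk_eq_ncard_of_basis' [M.Finite] (hI : M.IsBasis' I X) : M.rk X = I.ncard := by
  have hset : {n | ∃ J, M.Indep J ∧ J ⊆ X ∧ J.ncard = n} = Set.Iic I.ncard := by
    ext n
    simp only [Set.mem_setOf_eq, Set.mem_Iic]
    constructor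
    · rintro ⟨J, hJ, hJX, rfl⟩; exact ncard_le_of_basis' hI hJ hJX
    · intro hn
      obtain ⟨J, hJI, hJn⟩ := Set.exists_subset_card_eq hn
      exact ⟨J, hI.indep.subset hJI, hJI.trans hI.subset, hJn⟩
  rw [rk, hset, csSup_Iic]

lemma rk_eq_ncard_of_basis [M.Finite] (hI : M.IsBasis I X) : M.rk X = I.ncard :=
  rk_eq_ncard_of_basis' hI.isBasis'

lemma Indep.rk_eq [M.Finite] (hI : M.Indep I) : M.rk I = I.ncard :=
  rk_eq_ncard_of_basis' hI.isBasis_self.isBasis'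

lemma ncard_le_rk [M.Finite] (hJ : M.Indep J) (hJX : J ⊆ X) : J.ncard ≤ M.rk X := by
  obtain ⟨I, hI⟩ := M.exists_isBasis' X
  rw [rk_eq_ncard_of_basis' hI]
  exact ncard_le_of_basis' hI hJ hJX

lemma rk_mono [M.Finite] (hXY : X ⊆ Y) : M.rk X ≤ M.rk Y := by
  obtain ⟨I, hI⟩ := M.exists_isBasis' X
  rw [rk_eq_ncard_of_basis' hI]
  exact ncard_le_rk hI.indep (hI.subset.trans hXY)

lemma rk_le_ncard [M.Finite] (hX : X.Finite) : M.rk X ≤ X.ncard := by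
  obtain ⟨I, hI⟩ := M.exists_isBasis' X
  rw [rk_eq_ncard_of_basis' hI]
  exact Set.ncard_le_ncard hI.subset hX

@[simp] lemma rk_empty (M : Matroid α) [M.Finite] : M.rk ∅ = 0 := by
  simpa using M.empty_indep.rk_eq

lemma rk_closure_eq [M.Finite] (X : Set α) : M.rk (M.closure X) = M.rk X := by
  obtain ⟨I, hI⟩ := M.exists_isBasis' X
  rw [rk_eq_ncard_of_basis' hI, rk_eq_ncard_of_basis hI.isBasis_closure_right]

lemma rk_inter_ground (M : Matroid α) [M.Finite] (X : Set α) : M.rk (X ∩ M.E) = M.rk X := by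
  obtain ⟨I, hI⟩ := M.exists_isBasis' X
  rw [rk_eq_ncard_of_basis' hI, rk_eq_ncard_of_basis hI.isBasis_inter_ground]

lemma mem_closure_iff_rk [M.Finite] (hX : X ⊆ M.E) (he : e ∈ M.E) :
    e ∈ M.closure X ↔ M.rk (insert e X) = M.rk X := by
  constructor
  · intro h
    refine le_antisymm ?_ (rk_mono (Set.subset_insert _ _))
    have h1 : insert e X ⊆ M.closure X := Set.insert_subset h (M.subset_closure X hX)
    have := rk_mono (M := M) h1
    rwa [rk_closure_eq] at this
  · intro h
    obtain ⟨I, hI⟩ := M.exists_isBasis' X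
    rw [← hI.closure_eq_closure]
    by_contra hecl
    have heI : e ∉ I := fun heI => hecl (M.mem_closure_of_mem' heI he)
    have hins : M.Indep (insert e I) :=
      (hI.indep.insert_indep_iff_of_notMem heI).2 ⟨he, hecl⟩
    have hle : (insert e I).ncard ≤ M.rk (insert e X) :=
      ncard_le_rk hins (Set.insert_subset_insert hI.subset)
    rw [h, rk_eq_ncard_of_basis' hI,
      Set.ncard_insert_of_notMem heI (M.set_finite I hI.indep.subset_ground)] at hle
    omega

lemma flat_of_closure_self (h : M.closure F = F) : M.IsFlat F := by
  refine ⟨fun I X hIF hIX => ?_, h ▸ M.closure_subset_ground F⟩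
  have h1 : X ⊆ M.closure I := hIX.subset_closure
  rwa [hIF.closure_eq_closure, h] at h1

lemma flat_iff_rk [M.Finite] (hF : F ⊆ M.E) :
    M.IsFlat F ↔ ∀ e ∈ M.E \ F, M.rk (insert e F) ≠ M.rk F := by
  constructor
  · rintro hFl e ⟨heE, heF⟩ hrk
    exact heF (hFl.closure ▸ (mem_closure_iff_rk hF heE).2 hrk)
  · intro h
    refine flat_of_closure_self (Set.Subset.antisymm ?_ (M.subset_closure F hF))
    intro e he
    have heE : e ∈ M.E := M.mem_ground_of_mem_closure he
    by_contra heF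
    exact h e ⟨heE, heF⟩ ((mem_closure_iff_rk hF heE).1 he)

lemma rk_insert_le [M.Finite] (X : Set α) (e : α) : M.rk (insert e X) ≤ M.rk X + 1 := by
  obtain ⟨J, hJ⟩ := M.exists_isBasis' (insert e X)
  rw [rk_eq_ncard_of_basis' hJ]
  have h1 : M.rk X ≥ (J \ {e}).ncard :=
    ncard_le_rk (hJ.indep.diff _) (by
      intro x hx
      obtain (rfl | h) := hJ.subset hx.1
      · exact absurd rfl hx.2
      · exact h)
  have hJfin : J.Finite := M.set_finite J hJ.indep.subset_ground
  rcases Classical.em (e ∈ J) with he | he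
  · have := Set.ncard_diff_singleton_add_one he hJfin
    omega
  · rw [Set.diff_singleton_eq_self he] at h1; omega

lemma rk_union_le_add_ncard [M.Finite] (X : Set α) (hS : S.Finite) :
    M.rk (X ∪ S) ≤ M.rk X + S.ncard := by
  refine Set.Finite.induction_on S hS (motive := fun S _ => M.rk (X ∪ S) ≤ M.rk X + S.ncard)
    (by simp) (fun {a s} ha hs ih => ?_)
  rw [Set.union_insert]
  calc M.rk (insert a (X ∪ s)) ≤ M.rk (X ∪ s) + 1 := rk_insert_le _ _
    _ ≤ M.rk X + s.ncard + 1 := by omega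
    _ = M.rk X + (insert a s).ncard := by rw [Set.ncard_insert_of_notMem ha hs]; omega


variable {α : Type*}
variable {M : Matroid α} {I J X Y S F B C D : Set α} {e f : α}



lemma exists_circuit_of_dep [M.Finite] (hD : M.Dep D) : ∃ C, M.IsCircuit' C ∧ C ⊆ D := by
  have hfin : D.Finite := M.set_finite D hD.subset_ground
  obtain ⟨n, hn⟩ : ∃ n, D.ncard ≤ n := ⟨D.ncard, le_refl _⟩
  induction n generalizing D with
  | zero =>
      exfalso
      have := hD.nonempty
      have := Set.ncard_pos hfin |>.2 this
      omega
  | succ n ih =>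
      by_cases h : ∀ D', D' ⊂ D → M.Indep D'
      · exact ⟨D, ⟨hD, h⟩, Set.Subset.rfl⟩
      · push_neg at h
        obtain ⟨D', hD'ss, hD'dep⟩ := h
        have hD'E : D' ⊆ M.E := hD'ss.subset.trans hD.subset_ground
        have hD'dep : M.Dep D' := dep_of_not_indep hD'dep hD'E
        have hlt : D'.ncard < D.ncard := Set.ncard_lt_ncard hD'ss hfin
        obtain ⟨C, hC, hCD'⟩ := ih hD'dep (hfin.subset hD'ss.subset) (by omega)
        exact ⟨C, hC, hCD'.trans hD'ss.subset⟩

lemma exists_circuit_of_mem_closure [M.Finite] (hB : B ⊆ M.E) (he : e ∈ B)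
    (hcl : e ∈ M.closure (B \ {e})) : ∃ C, M.IsCircuit' C ∧ C ⊆ B ∧ e ∈ C := by
  obtain ⟨I, hI⟩ := M.exists_isBasis' (B \ {e})
  have heI : e ∉ I := fun h => (hI.subset h).2 rfl
  rw [← hI.closure_eq_closure] at hcl
  have hdep : M.Dep (insert e I) := hI.indep.insert_dep_iff.2 ⟨hcl, heI⟩
  obtain ⟨C, hC, hCsub⟩ := exists_circuit_of_dep hdep
  refine ⟨C, hC, ?_, ?_⟩
  · exact hCsub.trans (Set.insert_subset he ((hI.subset.trans Set.diff_subset)))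
  · by_contra heC
    have : C ⊆ I := fun x hx => (hCsub hx).resolve_left (fun h => heC (h ▸ hx))
    exact hC.1.not_indep (hI.indep.subset this)

lemma IsCircuit'.diff_singleton_indep (hC : M.IsCircuit' C) (he : e ∈ C) : M.Indep (C \ {e}) :=
  hC.2 _ (Set.sdiff_singleton_ssubset.2 he)

lemma IsCircuit'.mem_closure_diff_singleton [M.Finite] (hC : M.IsCircuit' C) (he : e ∈ C) :
    e ∈ M.closure (C \ {e}) := by
  have hi : M.Indep (C \ {e}) := hC.diff_singleton_indep he
  by_contra hecl
  have heE : e ∈ M.E := hC.1.subset_ground he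
  have : M.Indep (insert e (C \ {e})) :=
    (hi.insert_indep_iff_of_notMem (fun h => h.2 rfl)).2 ⟨heE, hecl⟩
  rw [Set.insert_diff_singleton, Set.insert_eq_of_mem he] at this
  exact hC.1.not_indep this

lemma IsCircuit'.ncard_eq [M.Finite] (hC : M.IsCircuit' C) : C.ncard = M.rk C + 1 := by
  have hfin : C.Finite := M.set_finite C hC.1.subset_ground
  obtain ⟨e, he⟩ := hC.1.nonempty
  have h1 : (C \ {e}).ncard ≤ M.rk C :=
    ncard_le_rk (hC.diff_singleton_indep he) Set.diff_subset
  rw [Set.ncard_diff_singleton_of_mem he] at h1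
  have h2 : M.rk C ≠ C.ncard := by
    intro h
    obtain ⟨I, hI⟩ := M.exists_isBasis' C
    have hIC : I = C := Set.eq_of_subset_of_ncard_le hI.subset
      (by rw [← rk_eq_ncard_of_basis' hI, h]) hfin
    exact hC.1.not_indep (hIC ▸ hI.indep)
  have h3 : M.rk C ≤ C.ncard := rk_le_ncard hfin
  have h4 : 0 < C.ncard := Set.ncard_pos hfin |>.2 ⟨e, he⟩
  omega

lemma eta_mono [M.Finite] (hJI : J ⊆ I) (hI : I ⊆ M.E) :
    J.ncard + M.rk I ≤ I.ncard + M.rk J := by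
  have hIfin : I.Finite := M.set_finite I hI
  have h1 : M.rk I ≤ M.rk J + (I \ J).ncard := by
    have := rk_union_le_add_ncard (M := M) (S := I \ J) J (hIfin.subset Set.diff_subset)
    rwa [Set.union_diff_cancel hJI] at this
  have h2 : J.ncard + (I \ J).ncard = I.ncard := by
    rw [← Set.ncard_diff_add_ncard_of_subset hJI hIfin]; omega
  omega

lemma base_rk [M.Finite] (hB : M.IsBase B) : M.rk M.E = B.ncard :=
  rk_eq_ncard_of_basis' hB.isBasis_ground.isBasis'

lemma closure_eq_ground_of_rk_eq [M.Finite] (hX : X ⊆ M.E) (h : M.rk X = M.rk M.E) :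
    M.closure X = M.E := by
  refine Set.Subset.antisymm (M.closure_subset_ground X) (fun e he => ?_)
  rw [mem_closure_iff_rk hX he]
  have h1 : M.rk (insert e X) ≤ M.rk M.E := rk_mono (Set.insert_subset he hX)
  have h2 : M.rk X ≤ M.rk (insert e X) := rk_mono (Set.subset_insert _ _)
  omega

lemma IsFlat.rk_lt [M.Finite] (hF : M.IsFlat F) (hne : F ≠ M.E) : M.rk F < M.rk M.E := by
  have hle : M.rk F ≤ M.rk M.E := rk_mono hF.subset_ground
  rcases lt_or_eq_of_le hle with h | h
  · exact h
  · exact absurd (hF.closure ▸ closure_eq_ground_of_rk_eq hF.subset_ground h) hne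

lemma rk_singleton_of_dep [M.Finite] (he : e ∈ M.E) (h : ¬ M.Indep {e}) : M.rk {e} = 0 := by
  have h1 : M.rk {e} ≤ 1 := by
    simpa using rk_le_ncard (M := M) (Set.finite_singleton e)
  rcases Nat.lt_or_ge (M.rk {e}) 1 with h2 | h2
  · omega
  · exfalso
    obtain ⟨I, hI⟩ := M.exists_isBasis' {e}
    have : I = {e} := Set.eq_of_subset_of_ncard_le hI.subset
      (by rw [← rk_eq_ncard_of_basis' hI, Set.ncard_singleton]; omega) (Set.finite_singleton e)
    exact h (this ▸ hI.indep)


variable {α : Type*}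
variable {M N : Matroid α} {I J X Y S F B C D : Set α} {e f : α}


lemma rk_le_of_subset_closure [M.Finite] (h : X ⊆ M.closure Y) : M.rk X ≤ M.rk Y := by
  have := rk_mono (M := M) h
  rwa [rk_closure_eq] at this

/-- The independence predicate of the free product. -/
def FPIndep (M N : Matroid α) (X : Set α) : Prop :=
  X ⊆ M.E ∪ N.E ∧ M.Indep (X ∩ M.E) ∧
    (X ∩ M.E).ncard + (X ∩ N.E).ncard ≤ M.rk M.E + N.rk (X ∩ N.E)

variable [M.Finite] [N.Finite]

lemma fpindep_empty (M N : Matroid α) [M.Finite] : FPIndep M N ∅ := by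
  refine ⟨Set.empty_subset _, by simpa using M.empty_indep, ?_⟩
  simp

lemma fpindep_subset (hJ : FPIndep M N J) (hIJ : I ⊆ J) : FPIndep M N I := by
  obtain ⟨hJE, hJi, hJc⟩ := hJ
  have hBfin : (J ∩ N.E).Finite := N.ground_finite.subset Set.inter_subset_right
  have hAfin : (J ∩ M.E).Finite := M.ground_finite.subset Set.inter_subset_right
  refine ⟨hIJ.trans hJE, hJi.subset (Set.inter_subset_inter_left _ hIJ), ?_⟩
  have h1 := eta_mono (M := N) (Set.inter_subset_inter_left N.E hIJ) Set.inter_subset_right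
  have h2 : (I ∩ M.E).ncard ≤ (J ∩ M.E).ncard :=
    Set.ncard_le_ncard (Set.inter_subset_inter_left _ hIJ) hAfin
  omega

lemma fpindep_aug (hdisj : Disjoint M.E N.E) (hI : FPIndep M N I) (hJ : FPIndep M N J)
    (hIJ : I.ncard < J.ncard) : ∃ e ∈ J, e ∉ I ∧ FPIndep M N (insert e I) := by
  obtain ⟨hIE, hIi, hIc⟩ := hI
  obtain ⟨hJE, hJi, hJc⟩ := hJ
  have hEfin : (M.E ∪ N.E).Finite := M.ground_finite.union N.ground_finite
  have hIfin : I.Finite := hEfin.subset hIE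
  have hJfin : J.Finite := hEfin.subset hJE
  have hIsplit : I.ncard = (I ∩ M.E).ncard + (I ∩ N.E).ncard := by
    rw [← Set.ncard_union_eq (hdisj.mono Set.inter_subset_right Set.inter_subset_right)
      (hIfin.subset Set.inter_subset_left) (hIfin.subset Set.inter_subset_left),
      ← Set.inter_union_distrib_left, Set.inter_eq_self_of_subset_left hIE]
  have hJsplit : J.ncard = (J ∩ M.E).ncard + (J ∩ N.E).ncard := by
    rw [← Set.ncard_union_eq (hdisj.mono Set.inter_subset_right Set.inter_subset_right)
      (hJfin.subset Set.inter_subset_left) (hJfin.subset Set.inter_subset_left),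
      ← Set.inter_union_distrib_left, Set.inter_eq_self_of_subset_left hJE]
  -- the key inequality from independence of I
  rcases eq_or_lt_of_le hIc with heq | hlt
  · -- slack 0 : rank of J∩N.E exceeds that of I∩N.E
    have hrkJ : N.rk (I ∩ N.E) < N.rk (J ∩ N.E) := by omega
    have : ∃ e ∈ (J ∩ N.E), e ∉ N.closure (I ∩ N.E) := by
      by_contra h
      push_neg at h
      exact absurd (rk_le_of_subset_closure (M := N) h) (by omega)
    obtain ⟨e, heJN, hecl⟩ := this
    have heN : e ∈ N.E := heJN.2
    have heM : e ∉ M.E := fun h => hdisj.ne_of_mem h heN rfl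
    have heI : e ∉ I ∩ N.E := fun h => hecl (N.mem_closure_of_mem' h heN)
    have heI' : e ∉ I := fun h => heI ⟨h, heN⟩
    have hrk : N.rk (insert e (I ∩ N.E)) = N.rk (I ∩ N.E) + 1 := by
      have h1 := rk_insert_le (M := N) (I ∩ N.E) e
      have h2 : N.rk (insert e (I ∩ N.E)) ≠ N.rk (I ∩ N.E) := by
        intro h; exact hecl ((mem_closure_iff_rk Set.inter_subset_right heN).2 h)
      have h3 := rk_mono (M := N) (Set.subset_insert e (I ∩ N.E))
      omega
    refine ⟨e, heJN.1, heI', Set.insert_subset (Set.mem_union_right _ heN) hIE, ?_, ?_⟩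
    · rwa [Set.insert_inter_of_notMem heM]
    · rw [Set.insert_inter_of_notMem heM, Set.insert_inter_of_mem heN, hrk,
        Set.ncard_insert_of_notMem heI (hIfin.subset Set.inter_subset_left)]
      omega
  · -- positive slack
    by_cases hBJ : ∃ e ∈ J ∩ N.E, e ∉ I
    · obtain ⟨e, heJN, heI⟩ := hBJ
      have heN : e ∈ N.E := heJN.2
      have heM : e ∉ M.E := fun h => hdisj.ne_of_mem h heN rfl
      refine ⟨e, heJN.1, heI, Set.insert_subset (Set.mem_union_right _ heN) hIE, ?_, ?_⟩
      · rwa [Set.insert_inter_of_notMem heM]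
      · rw [Set.insert_inter_of_notMem heM, Set.insert_inter_of_mem heN,
          Set.ncard_insert_of_notMem (fun h => heI h.1) (hIfin.subset Set.inter_subset_left)]
        have := rk_mono (M := N) (Set.subset_insert e (I ∩ N.E))
        omega
    · push_neg at hBJ
      have hBsub : J ∩ N.E ⊆ I ∩ N.E := fun x hx => ⟨hBJ x hx, hx.2⟩
      have hBle : (J ∩ N.E).ncard ≤ (I ∩ N.E).ncard :=
        Set.ncard_le_ncard hBsub (hIfin.subset Set.inter_subset_left)
      have hAlt : (I ∩ M.E).ncard < (J ∩ M.E).ncard := by omega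
      have hAlt' : (I ∩ M.E).encard < (J ∩ M.E).encard := by
        rw [← (hIfin.subset Set.inter_subset_left).cast_ncard_eq,
          ← (hJfin.subset Set.inter_subset_left).cast_ncard_eq]
        exact_mod_cast hAlt
      obtain ⟨e, heD, hins⟩ := hIi.augment hJi hAlt'
      have heM : e ∈ M.E := heD.1.2
      have heN : e ∉ N.E := fun h => hdisj.ne_of_mem heM h rfl
      have heI : e ∉ I := by
        intro h
        rcases hIE h with h1 | h1
        · exact heD.2 ⟨h, h1⟩
        · exact heN h1
      refine ⟨e, heD.1.1, heI, Set.insert_subset (Set.mem_union_left _ heM) hIE, ?_, ?_⟩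
      · rwa [Set.insert_inter_of_mem heM]
      · rw [Set.insert_inter_of_mem heM, Set.insert_inter_of_notMem heN,
          Set.ncard_insert_of_notMem (fun h => heI h.1) (hIfin.subset Set.inter_subset_left)]
        omega

lemma fpindep_subset_ground (hI : FPIndep M N I) : I ⊆ M.E ∪ N.E := hI.1


variable {α : Type*}
variable {M N : Matroid α} {I J X Y S A F B C D : Set α} {e f : α}





variable [M.Finite] [N.Finite]

/-- The free product matroid. -/
noncomputable def FP (M N : Matroid α) [M.Finite] [N.Finite] (hdisj : Disjoint M.E N.E) :
    Matroid α :=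
  (IndepMatroid.ofFinite (M.ground_finite.union N.ground_finite) (FPIndep M N)
    (fpindep_empty M N) (fun _ _ hJ hIJ => fpindep_subset hJ hIJ)
    (fun _ _ hI hJ hc => by
      obtain ⟨e, heJ, heI, h⟩ := fpindep_aug hdisj hI hJ hc
      exact ⟨e, heJ, heI, h⟩)
    (fun _ hI => hI.1)).matroid

variable {hdisj : Disjoint M.E N.E}

@[simp] lemma FP_E : (FP M N hdisj).E = M.E ∪ N.E := rfl

@[simp] lemma FP_indep : (FP M N hdisj).Indep I ↔ FPIndep M N I := by
  simp [FP]

instance FP_finite : (FP M N hdisj).Finite :=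
  ⟨M.ground_finite.union N.ground_finite⟩

-- set helpers
lemma interN_eq_empty (hdisj : Disjoint M.E N.E) (hX : X ⊆ M.E) : X ∩ N.E = ∅ :=
  Set.disjoint_iff_inter_eq_empty.1 (hdisj.mono_left hX)

lemma interM_eq_empty (hdisj : Disjoint M.E N.E) (hX : X ⊆ N.E) : X ∩ M.E = ∅ :=
  Set.disjoint_iff_inter_eq_empty.1 (hdisj.symm.mono_left hX)

lemma union_interM (hdisj : Disjoint M.E N.E) (hA : A ⊆ M.E) (hB : B ⊆ N.E) :
    (A ∪ B) ∩ M.E = A := by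
  rw [Set.union_inter_distrib_right, Set.inter_eq_self_of_subset_left hA,
    interM_eq_empty hdisj hB, Set.union_empty]

lemma union_interN (hdisj : Disjoint M.E N.E) (hA : A ⊆ M.E) (hB : B ⊆ N.E) :
    (A ∪ B) ∩ N.E = B := by
  rw [Set.union_inter_distrib_right, Set.inter_eq_self_of_subset_left hB,
    interN_eq_empty hdisj hA, Set.empty_union]

lemma FP_rk_of_subset_M (hdisj : Disjoint M.E N.E) (hX : X ⊆ M.E) :
    (FP M N hdisj).rk X = M.rk X := by
  refine le_antisymm ?_ ?_
  · obtain ⟨I, hI⟩ := (FP M N hdisj).exists_isBasis' X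
    rw [rk_eq_ncard_of_basis' hI]
    have hIi : FPIndep M N I := FP_indep.1 hI.indep
    have hIM : I ⊆ M.E := hI.subset.trans hX
    have : I ∩ M.E = I := Set.inter_eq_self_of_subset_left hIM
    exact ncard_le_rk (this ▸ hIi.2.1) hI.subset
  · obtain ⟨I, hI⟩ := M.exists_isBasis' X
    rw [rk_eq_ncard_of_basis' hI]
    have hIM : I ⊆ M.E := hI.indep.subset_ground
    refine ncard_le_rk (FP_indep.2 ⟨hIM.trans Set.subset_union_left, ?_, ?_⟩) hI.subset
    · rw [Set.inter_eq_self_of_subset_left hIM]; exact hI.indep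
    · rw [Set.inter_eq_self_of_subset_left hIM, interN_eq_empty hdisj hIM]
      have := ncard_le_rk hI.indep hIM
      simp only [Set.ncard_empty]
      omega

lemma FP_rk_union (hdisj : Disjoint M.E N.E) (hY : Y ⊆ N.E) :
    (FP M N hdisj).rk (M.E ∪ Y) = M.rk M.E + N.rk Y := by
  refine le_antisymm ?_ ?_
  · obtain ⟨I, hI⟩ := (FP M N hdisj).exists_isBasis' (M.E ∪ Y)
    rw [rk_eq_ncard_of_basis' hI]
    have hIi : FPIndep M N I := FP_indep.1 hI.indep
    have hIfin : I.Finite := (M.ground_finite.union N.ground_finite).subset hIi.1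
    have hsplit : I.ncard = (I ∩ M.E).ncard + (I ∩ N.E).ncard := by
      rw [← Set.ncard_union_eq (hdisj.mono Set.inter_subset_right Set.inter_subset_right)
        (hIfin.subset Set.inter_subset_left) (hIfin.subset Set.inter_subset_left),
        ← Set.inter_union_distrib_left, Set.inter_eq_self_of_subset_left hIi.1]
    have hBY : I ∩ N.E ⊆ Y := by
      rintro x ⟨hxI, hxN⟩
      rcases hI.subset hxI with h | h
      · exact absurd rfl (hdisj.ne_of_mem h hxN)
      · exact h
    have := rk_mono (M := N) hBY
    have := hIi.2.2
    omega
  · obtain ⟨BM, hBM⟩ := M.exists_isBase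
    obtain ⟨J, hJ⟩ := N.exists_isBasis' Y
    have hJN : J ⊆ N.E := hJ.indep.subset_ground
    have hd : Disjoint BM J := hdisj.mono hBM.subset_ground hJN
    have hBMfin : BM.Finite := M.ground_finite.subset hBM.subset_ground
    have hJfin : J.Finite := N.ground_finite.subset hJN
    have hind : FPIndep M N (BM ∪ J) := by
      refine ⟨Set.union_subset (hBM.subset_ground.trans Set.subset_union_left)
        (hJN.trans Set.subset_union_right), ?_, ?_⟩
      · rw [union_interM hdisj hBM.subset_ground hJN]; exact hBM.indep
      · rw [union_interM hdisj hBM.subset_ground hJN,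
          union_interN hdisj hBM.subset_ground hJN, ← base_rk hBM, hJ.indep.rk_eq]
    have hle := ncard_le_rk (M := FP M N hdisj) (FP_indep.2 hind)
      (Set.union_subset_union hBM.subset_ground hJ.subset)
    rwa [Set.ncard_union_eq hd hBMfin hJfin, ← base_rk hBM, ← rk_eq_ncard_of_basis' hJ] at hle

lemma FP_rk_formula (hdisj : Disjoint M.E N.E) (hX : X ⊆ M.E ∪ N.E) :
    (FP M N hdisj).rk X =
      min (M.rk (X ∩ M.E) + (X ∩ N.E).ncard) (M.rk M.E + N.rk (X ∩ N.E)) := by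
  set A := X ∩ M.E with hA
  set B := X ∩ N.E with hB
  have hAM : A ⊆ M.E := Set.inter_subset_right
  have hBN : B ⊆ N.E := Set.inter_subset_right
  have hAfin : A.Finite := M.ground_finite.subset hAM
  have hBfin : B.Finite := N.ground_finite.subset hBN
  have hXAB : X = A ∪ B := by
    rw [hA, hB, ← Set.inter_union_distrib_left, Set.inter_eq_self_of_subset_left hX]
  refine le_antisymm ?_ ?_
  · obtain ⟨I, hI⟩ := (FP M N hdisj).exists_isBasis' X
    rw [rk_eq_ncard_of_basis' hI]
    have hIi : FPIndep M N I := FP_indep.1 hI.indep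
    have hIfin : I.Finite := (M.ground_finite.union N.ground_finite).subset hIi.1
    have hsplit : I.ncard = (I ∩ M.E).ncard + (I ∩ N.E).ncard := by
      rw [← Set.ncard_union_eq (hdisj.mono Set.inter_subset_right Set.inter_subset_right)
        (hIfin.subset Set.inter_subset_left) (hIfin.subset Set.inter_subset_left),
        ← Set.inter_union_distrib_left, Set.inter_eq_self_of_subset_left hIi.1]
    have h1 : (I ∩ M.E).ncard ≤ M.rk A :=
      ncard_le_rk hIi.2.1 (Set.inter_subset_inter_left _ hI.subset)
    have h2 : (I ∩ N.E).ncard ≤ B.ncard :=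
      Set.ncard_le_ncard (Set.inter_subset_inter_left _ hI.subset) hBfin
    have h3 : N.rk (I ∩ N.E) ≤ N.rk B := rk_mono (Set.inter_subset_inter_left _ hI.subset)
    have h4 := hIi.2.2
    omega
  · rcases le_total (M.rk A + B.ncard) (M.rk M.E + N.rk B) with hmin | hmin
    · -- take a basis of A together with all of B
      obtain ⟨IA, hIA⟩ := M.exists_isBasis' A
      have hind : FPIndep M N (IA ∪ B) := by
        refine ⟨Set.union_subset ((hIA.indep.subset_ground).trans Set.subset_union_left)
          (hBN.trans Set.subset_union_right), ?_, ?_⟩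
        · rw [union_interM hdisj hIA.indep.subset_ground hBN]; exact hIA.indep
        · rw [union_interM hdisj hIA.indep.subset_ground hBN,
            union_interN hdisj hIA.indep.subset_ground hBN,
            ← rk_eq_ncard_of_basis' hIA]
          omega
      have hle := ncard_le_rk (M := FP M N hdisj) (X := X) (FP_indep.2 hind)
        (by rw [hXAB]; exact Set.union_subset_union hIA.subset Set.Subset.rfl)
      rw [Set.ncard_union_eq (hdisj.mono hIA.indep.subset_ground hBN)
        (hAfin.subset hIA.subset) hBfin, ← rk_eq_ncard_of_basis' hIA] at hle
      omega
    · -- take a basis of A and an intermediate superset of a basis of B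
      obtain ⟨IA, hIA⟩ := M.exists_isBasis' A
      obtain ⟨IB, hIB⟩ := N.exists_isBasis' B
      have hIAcard : IA.ncard = M.rk A := (rk_eq_ncard_of_basis' hIA).symm
      have hIBcard : IB.ncard = N.rk B := (rk_eq_ncard_of_basis' hIB).symm
      have hrMA : M.rk A ≤ M.rk M.E := rk_mono hAM
      -- we want B' with IB ⊆ B' ⊆ B and |B'| = rM + rk B - rk A
      obtain ⟨B', hIBB', hB'B, hB'card⟩ := Set.exists_subsuperset_card_eq hIB.subset
        (by omega) (by omega : M.rk M.E + N.rk B - M.rk A ≤ B.ncard)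
      have hB'N : B' ⊆ N.E := hB'B.trans hBN
      have hrkB' : N.rk B' = N.rk B := by
        have h1 : N.rk B' ≤ N.rk B := rk_mono hB'B
        have h2 : N.rk IB ≤ N.rk B' := rk_mono hIBB'
        rw [hIB.indep.rk_eq] at h2
        omega
      have hind : FPIndep M N (IA ∪ B') := by
        refine ⟨Set.union_subset ((hIA.indep.subset_ground).trans Set.subset_union_left)
          (hB'N.trans Set.subset_union_right), ?_, ?_⟩
        · rw [union_interM hdisj hIA.indep.subset_ground hB'N]; exact hIA.indep
        · rw [union_interM hdisj hIA.indep.subset_ground hB'N,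
            union_interN hdisj hIA.indep.subset_ground hB'N, hrkB']
          omega
      have hle := ncard_le_rk (M := FP M N hdisj) (X := X) (FP_indep.2 hind)
        (by rw [hXAB]; exact Set.union_subset_union hIA.subset hB'B)
      rw [Set.ncard_union_eq (hdisj.mono hIA.indep.subset_ground hB'N)
        (hAfin.subset hIA.subset) (hBfin.subset hB'B)] at hle
      omega


variable {α : Type*}
variable {M N : Matroid α} {I J X Y S A F B C D : Set α} {e f : α}





variable [M.Finite] [N.Finite] {hdisj : Disjoint M.E N.E}

lemma FP_circuit_of_M (hdisj : Disjoint M.E N.E) (hC : M.IsCircuit' C) :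
    (FP M N hdisj).IsCircuit' C := by
  have hCM : C ⊆ M.E := hC.1.subset_ground
  constructor
  · refine ⟨fun h => ?_, (FP_E (hdisj := hdisj)) ▸ hCM.trans Set.subset_union_left⟩
    have := ((FP_indep (hdisj := hdisj)).1 h).2.1
    rw [Set.inter_eq_self_of_subset_left hCM] at this
    exact hC.1.not_indep this
  · intro D hD
    have hDi : M.Indep D := hC.2 D hD
    have hDM : D ⊆ M.E := hDi.subset_ground
    refine FP_indep.2 ⟨hDM.trans Set.subset_union_left, ?_, ?_⟩
    · rwa [Set.inter_eq_self_of_subset_left hDM]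
    · rw [Set.inter_eq_self_of_subset_left hDM, interN_eq_empty hdisj hDM]
      have := ncard_le_rk hDi hDM
      simp only [Set.ncard_empty]
      omega

lemma FP_circuit_type2 (hdisj : Disjoint M.E N.E) (hA : M.Indep A) (hB : B ⊆ N.E)
    (hBcyc : ∀ e ∈ B, e ∈ N.closure (B \ {e})) (hBne : B.Nonempty)
    (hcard : A.ncard + B.ncard = M.rk M.E + N.rk B + 1) :
    (FP M N hdisj).IsCircuit' (A ∪ B) := by
  have hAM : A ⊆ M.E := hA.subset_ground
  have hAfin : A.Finite := M.ground_finite.subset hAM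
  have hBfin : B.Finite := N.ground_finite.subset hB
  have hsub : A ∪ B ⊆ M.E ∪ N.E := Set.union_subset_union hAM hB
  have hdel : ∀ x ∈ A ∪ B, FPIndep M N ((A ∪ B) \ {x}) := by
    rintro x (hx | hx)
    · have hxN : x ∉ B := fun h => hdisj.ne_of_mem (hAM hx) (hB h) rfl
      have h1 : (A ∪ B) \ {x} = (A \ {x}) ∪ B := by
        rw [Set.union_diff_distrib, Set.diff_singleton_eq_self hxN]
      rw [h1]
      refine ⟨Set.union_subset ((Set.diff_subset.trans hAM).trans Set.subset_union_left)
        (hB.trans Set.subset_union_right), ?_, ?_⟩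
      · rw [union_interM hdisj (Set.diff_subset.trans hAM) hB]
        exact hA.subset Set.diff_subset
      · rw [union_interM hdisj (Set.diff_subset.trans hAM) hB,
          union_interN hdisj (Set.diff_subset.trans hAM) hB,
          Set.ncard_diff_singleton_of_mem hx]
        have hApos : 1 ≤ A.ncard := (Set.ncard_pos hAfin).2 ⟨x, hx⟩
        omega
    · have hxM : x ∉ A := fun h => hdisj.ne_of_mem (hAM h) (hB hx) rfl
      have h1 : (A ∪ B) \ {x} = A ∪ (B \ {x}) := by
        rw [Set.union_diff_distrib, Set.diff_singleton_eq_self hxM]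
      have hrk : N.rk (B \ {x}) = N.rk B := by
        have h2 := (mem_closure_iff_rk (Set.diff_subset.trans hB) (hB hx)).1 (hBcyc x hx)
        rw [Set.insert_diff_singleton, Set.insert_eq_of_mem hx] at h2
        exact h2.symm
      rw [h1]
      refine ⟨Set.union_subset (hAM.trans Set.subset_union_left)
        ((Set.diff_subset.trans hB).trans Set.subset_union_right), ?_, ?_⟩
      · rw [union_interM hdisj hAM (Set.diff_subset.trans hB)]; exact hA
      · rw [union_interM hdisj hAM (Set.diff_subset.trans hB),
          union_interN hdisj hAM (Set.diff_subset.trans hB),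
          Set.ncard_diff_singleton_of_mem hx, hrk]
        have hBpos : 1 ≤ B.ncard := (Set.ncard_pos hBfin).2 ⟨x, hx⟩
        omega
  constructor
  · refine ⟨fun h => ?_, (FP_E (hdisj := hdisj)) ▸ hsub⟩
    have h2 := (FP_indep.1 h).2.2
    rw [union_interM hdisj hAM hB, union_interN hdisj hAM hB] at h2
    omega
  · intro D hD
    obtain ⟨x, hxC, hxD⟩ := Set.exists_of_ssubset hD
    have hDsub : D ⊆ (A ∪ B) \ {x} :=
      Set.subset_diff_singleton hD.subset hxD
    exact FP_indep.2 (fpindep_subset (hdel x hxC) hDsub)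

lemma FP_circuit_inv (hdisj : Disjoint M.E N.E) (hC : (FP M N hdisj).IsCircuit' C) :
    (C ⊆ M.E ∧ M.IsCircuit' C) ∨
      (M.Indep (C ∩ M.E) ∧ (C ∩ N.E).Nonempty ∧
        (∀ e ∈ C ∩ N.E, e ∈ N.closure ((C ∩ N.E) \ {e})) ∧
        (C ∩ M.E).ncard + (C ∩ N.E).ncard = M.rk M.E + N.rk (C ∩ N.E) + 1) := by
  have hCE : C ⊆ M.E ∪ N.E := (FP_E (hdisj := hdisj)) ▸ hC.1.subset_ground
  have hCfin : C.Finite := (M.ground_finite.union N.ground_finite).subset hCE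
  have hCdep : ¬ FPIndep M N C := fun h => hC.1.not_indep (FP_indep.2 h)
  by_cases hAi : M.Indep (C ∩ M.E)
  · right
    have hcard : M.rk M.E + N.rk (C ∩ N.E) + 1 ≤ (C ∩ M.E).ncard + (C ∩ N.E).ncard := by
      by_contra h
      exact hCdep ⟨hCE, hAi, by omega⟩
    have hAle : (C ∩ M.E).ncard ≤ M.rk M.E := ncard_le_rk hAi Set.inter_subset_right
    have hBne : (C ∩ N.E).Nonempty := by
      rw [Set.nonempty_iff_ne_empty]
      intro h
      rw [h] at hcard
      simp only [Set.ncard_empty, rk_empty] at hcard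
      omega
    have hBfin : (C ∩ N.E).Finite := hCfin.subset Set.inter_subset_left
    have hBN : C ∩ N.E ⊆ N.E := Set.inter_subset_right
    have hkey : ∀ b ∈ C ∩ N.E, N.rk ((C ∩ N.E) \ {b}) = N.rk (C ∩ N.E) ∧
        (C ∩ M.E).ncard + (C ∩ N.E).ncard = M.rk M.E + N.rk (C ∩ N.E) + 1 := by
      intro b hb
      have hbC : b ∈ C := hb.1
      have hbM : b ∉ M.E := fun h => hdisj.ne_of_mem h hb.2 rfl
      have hDss : C \ {b} ⊂ C := Set.sdiff_singleton_ssubset.2 hbC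
      have hDi : FPIndep M N (C \ {b}) := FP_indep.1 (hC.2 _ hDss)
      have e1 : (C \ {b}) ∩ M.E = C ∩ M.E := by
        ext y
        simp only [Set.mem_inter_iff, Set.mem_diff, Set.mem_singleton_iff]
        constructor
        · rintro ⟨⟨h1, _⟩, h2⟩; exact ⟨h1, h2⟩
        · rintro ⟨h1, h2⟩; exact ⟨⟨h1, fun h => hbM (h ▸ h2)⟩, h2⟩
      have e2 : (C \ {b}) ∩ N.E = (C ∩ N.E) \ {b} := by
        ext y
        simp only [Set.mem_inter_iff, Set.mem_diff, Set.mem_singleton_iff]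
        tauto
      obtain ⟨-, -, hci⟩ := hDi
      rw [e1, e2] at hci
      have h5 : N.rk ((C ∩ N.E) \ {b}) ≤ N.rk (C ∩ N.E) := rk_mono Set.diff_subset
      have h6 : ((C ∩ N.E) \ {b}).ncard = (C ∩ N.E).ncard - 1 :=
        Set.ncard_diff_singleton_of_mem hb
      have h7 : 1 ≤ (C ∩ N.E).ncard := (Set.ncard_pos hBfin).2 ⟨b, hb⟩
      constructor <;> omega
    refine ⟨hAi, hBne, fun b hb => ?_, (hkey _ hBne.some_mem).2⟩
    have h8 := (hkey b hb).1
    refine (mem_closure_iff_rk (Set.diff_subset.trans hBN) hb.2).2 ?_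
    rw [Set.insert_diff_singleton, Set.insert_eq_of_mem hb, h8]
  · left
    have hAdep : M.Dep (C ∩ M.E) := dep_of_not_indep hAi Set.inter_subset_right
    obtain ⟨C₀, hC₀, hC₀sub⟩ := exists_circuit_of_dep hAdep
    have hC₀C : C₀ ⊆ C := hC₀sub.trans Set.inter_subset_left
    rcases eq_or_ssubset_of_subset hC₀C with rfl | hss
    · exact ⟨hC₀sub.trans Set.inter_subset_right, hC₀⟩
    · exfalso
      exact (FP_circuit_of_M hdisj hC₀).1.not_indep (hC.2 _ hss)


variable {α : Type*}
variable {M N : Matroid α} {I J X Y S A F B C D : Set α} {e f : α}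


variable [M.Finite] [N.Finite] {hdisj : Disjoint M.E N.E}

-- non-coloop iff in closure of rest
lemma exists_base_not_mem_iff [M.Finite] (he : e ∈ M.E) :
    (∃ B, M.IsBase B ∧ e ∉ B) ↔ e ∈ M.closure (M.E \ {e}) := by
  constructor
  · rintro ⟨B, hB, heB⟩
    have h1 : B ⊆ M.E \ {e} := Set.subset_diff_singleton hB.subset_ground heB
    have := M.closure_subset_closure h1
    rw [hB.closure_eq] at this
    exact this he
  · intro hcl
    obtain ⟨I, hI⟩ := M.exists_isBasis' (M.E \ {e})
    have heI : e ∉ I := fun h => (hI.subset h).2 rfl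
    have hsp : M.E ⊆ M.closure I := by
      rw [hI.closure_eq_closure]
      intro x hx
      rcases eq_or_ne x e with rfl | hne
      · exact hcl
      · exact M.subset_closure _ Set.diff_subset ⟨hx, hne⟩
    exact ⟨I, hI.indep.isBase_of_ground_subset_closure hsp, heI⟩

lemma exists_base_mem_iff [M.Finite] (he : e ∈ M.E) :
    (∃ B, M.IsBase B ∧ e ∈ B) ↔ M.Indep {e} := by
  constructor
  · rintro ⟨B, hB, heB⟩
    exact hB.indep.subset (Set.singleton_subset_iff.2 heB)
  · intro h
    obtain ⟨B, hB, hsub⟩ := h.exists_isBase_superset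
    exact ⟨B, hB, hsub rfl⟩

lemma singleton_circuit_of_dep (he : e ∈ M.E) (h : ¬ M.Indep {e}) : M.IsCircuit' {e} := by
  refine ⟨⟨h, Set.singleton_subset_iff.2 he⟩, fun D hD => ?_⟩
  rw [Set.ssubset_singleton_iff.1 hD]
  exact M.empty_indep

theorem FP_cyclicFlat_iff (hdisj : Disjoint M.E N.E) (X : Set α) :
    (FP M N hdisj).CyclicFlat X ↔
      ((M.CyclicFlat X ∧ X ≠ M.E) ∨
        (∃ Y, N.CyclicFlat Y ∧ Y ≠ ∅ ∧ X = M.E ∪ Y) ∨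
        (X = M.E ∧ (∀ e ∈ M.E, ∃ B, M.IsBase B ∧ e ∉ B) ∧
          (∀ e ∈ N.E, ∃ B, N.IsBase B ∧ e ∈ B))) := by
  constructor
  · rintro ⟨hFlat, hCyc⟩
    have hXE : X ⊆ M.E ∪ N.E := FP_E (hdisj := hdisj) ▸ hFlat.subset_ground
    have hXsplit : X = (X ∩ M.E) ∪ (X ∩ N.E) := by
      rw [← Set.inter_union_distrib_left, Set.inter_eq_self_of_subset_left hXE]
    have hflat' := (flat_iff_rk (M := FP M N hdisj) (FP_E (hdisj := hdisj) ▸ hXE)).1 hFlat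
    by_cases hB : X ∩ N.E = ∅
    · -- X ⊆ M.E
      have hXM : X ⊆ M.E := by
        intro x hx
        rcases hXE hx with h | h
        · exact h
        · exfalso
          have hmem : x ∈ X ∩ N.E := ⟨hx, h⟩
          rw [hB] at hmem
          exact hmem
      have hcycM : ∀ e ∈ X, ∃ C, M.IsCircuit' C ∧ C ⊆ X ∧ e ∈ C := by
        intro e he
        obtain ⟨C, hC, hCX, heC⟩ := hCyc e he
        rcases FP_circuit_inv hdisj hC with ⟨-, hC'⟩ | ⟨-, hne, -, -⟩
        · exact ⟨C, hC', hCX, heC⟩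
        · exfalso
          obtain ⟨x, hx⟩ := hne
          have hmem : x ∈ X ∩ N.E := ⟨hCX hx.1, hx.2⟩
          rw [hB] at hmem
          exact hmem
      have hflatM : M.IsFlat X := by
        rw [flat_iff_rk hXM]
        rintro e ⟨heM, heX⟩ hrk
        refine hflat' e ⟨by rw [FP_E (hdisj := hdisj)]; exact Set.mem_union_left _ heM, heX⟩ ?_
        rw [FP_rk_of_subset_M hdisj (Set.insert_subset heM hXM),
          FP_rk_of_subset_M hdisj hXM, hrk]
      rcases eq_or_ne X M.E with rfl | hne
      · -- ground set : coloop-free and loop-free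
        refine Or.inr (Or.inr ⟨rfl, fun e he => ?_, fun e he => ?_⟩)
        · rw [exists_base_not_mem_iff he]
          obtain ⟨C, hC, hCX, heC⟩ := hcycM e he
          have := hC.mem_closure_diff_singleton heC
          exact M.closure_subset_closure
            (Set.diff_subset_diff_left hCX) this
        · rw [exists_base_mem_iff he]
          by_contra hdep
          have heM : e ∉ M.E := fun h => hdisj.ne_of_mem h he rfl
          refine hflat' e ⟨by rw [FP_E (hdisj := hdisj)]; exact Set.mem_union_right _ he, heM⟩ ?_
          have h1 : insert e M.E = M.E ∪ {e} := by
            rw [Set.union_singleton]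
          rw [h1, FP_rk_union hdisj (Set.singleton_subset_iff.2 he),
            FP_rk_of_subset_M hdisj Set.Subset.rfl, rk_singleton_of_dep he hdep]
          omega
      · exact Or.inl ⟨⟨hflatM, hcycM⟩, hne⟩
    · -- X ∩ N.E nonempty
      obtain ⟨b, hb⟩ := Set.nonempty_iff_ne_empty.2 hB
      -- first, M.E ⊆ X
      have hMX : M.E ⊆ X := by
        by_contra hMX
        obtain ⟨a, haM, haX⟩ := Set.not_subset.1 hMX
        have hrkne := hflat' a ⟨by rw [FP_E (hdisj := hdisj)]; exact Set.mem_union_left _ haM, haX⟩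
        have haN : a ∉ N.E := fun h => hdisj.ne_of_mem haM h rfl
        have hins : insert a X ∩ M.E = insert a (X ∩ M.E) := by
          rw [Set.insert_inter_of_mem haM]
        have hins' : insert a X ∩ N.E = X ∩ N.E := by
          rw [Set.insert_inter_of_notMem haN]
        rw [FP_rk_formula hdisj (Set.insert_subset (Set.mem_union_left _ haM) hXE),
          FP_rk_formula hdisj hXE, hins, hins'] at hrkne
        -- hence the first term must be the min, strictly below the second
        have hlt : M.rk (X ∩ M.E) + (X ∩ N.E).ncard < M.rk M.E + N.rk (X ∩ N.E) := by
          by_contra hge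
          push_neg at hge
          have h2 : M.rk (X ∩ M.E) ≤ M.rk (insert a (X ∩ M.E)) :=
            rk_mono (Set.subset_insert _ _)
          omega
        -- now use a circuit through b
        obtain ⟨C, hC, hCX, hbC⟩ := hCyc b hb.1
        rcases FP_circuit_inv hdisj hC with ⟨hCM, -⟩ | ⟨hA', hne', -, hcard'⟩
        · exact absurd (hCM hbC) (fun h => hdisj.ne_of_mem h hb.2 rfl)
        · have hsub1 : C ∩ M.E ⊆ X ∩ M.E := Set.inter_subset_inter_left _ hCX
          have hsub2 : C ∩ N.E ⊆ X ∩ N.E := Set.inter_subset_inter_left _ hCX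
          have h3 : (C ∩ M.E).ncard ≤ M.rk (X ∩ M.E) := ncard_le_rk hA' hsub1
          have h4 := eta_mono (M := N) hsub2 Set.inter_subset_right
          omega
      have hAeq : X ∩ M.E = M.E := Set.inter_eq_self_of_subset_right hMX
      have hBN : X ∩ N.E ⊆ N.E := Set.inter_subset_right
      have hXeq : X = M.E ∪ (X ∩ N.E) := by
        nth_rewrite 1 [hXsplit]
        rw [hAeq]
      refine Or.inr (Or.inl ⟨X ∩ N.E, ⟨?_, ?_⟩, Set.nonempty_iff_ne_empty.1 ⟨b, hb⟩, hXeq⟩)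
      · -- flat in N
        rw [flat_iff_rk hBN]
        rintro e ⟨heN, heB⟩ hrk
        have heM : e ∉ M.E := fun h => hdisj.ne_of_mem h heN rfl
        have heX : e ∉ X := by
          intro h
          exact heB ⟨h, heN⟩
        refine hflat' e ⟨by rw [FP_E (hdisj := hdisj)]; exact Set.mem_union_right _ heN, heX⟩ ?_
        have h1 : insert e X = M.E ∪ insert e (X ∩ N.E) := by
          nth_rewrite 1 [hXeq]
          rw [Set.union_insert]
        rw [h1]
        nth_rewrite 2 [hXeq]
        rw [FP_rk_union hdisj (Set.insert_subset heN hBN), FP_rk_union hdisj hBN, hrk]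
      · -- cyclic in N
        intro e he
        obtain ⟨C, hC, hCX, heC⟩ := hCyc e he.1
        rcases FP_circuit_inv hdisj hC with ⟨hCM, -⟩ | ⟨-, -, hcyc', -⟩
        · exact absurd (hCM heC) (fun h => hdisj.ne_of_mem h he.2 rfl)
        · have heC' : e ∈ C ∩ N.E := ⟨heC, he.2⟩
          obtain ⟨C', hC', hC'sub, heC''⟩ :=
            exists_circuit_of_mem_closure Set.inter_subset_right heC' (hcyc' e heC')
          exact ⟨C', hC', hC'sub.trans (Set.inter_subset_inter_left _ hCX), heC''⟩
  · rintro (⟨⟨hflat, hcyc⟩, hne⟩ | ⟨Y, ⟨hflat, hcyc⟩, hYne, rfl⟩ | ⟨rfl, hcfree, hlfree⟩)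
    · -- proper cyclic flat of M
      have hXM : X ⊆ M.E := hflat.subset_ground
      have hXE : X ⊆ M.E ∪ N.E := hXM.trans Set.subset_union_left
      constructor
      · rw [flat_iff_rk (M := FP M N hdisj) (FP_E (hdisj := hdisj) ▸ hXE)]
        rintro e ⟨heE, heX⟩
        rw [FP_E (hdisj := hdisj)] at heE
        rcases heE with heM | heN
        · rw [FP_rk_of_subset_M hdisj (Set.insert_subset heM hXM),
            FP_rk_of_subset_M hdisj hXM]
          exact (flat_iff_rk hXM).1 hflat e ⟨heM, heX⟩
        · have heM : e ∉ M.E := fun h => hdisj.ne_of_mem h heN rfl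
          have h1 : insert e X ∩ M.E = X := by
            rw [Set.insert_inter_of_notMem heM, Set.inter_eq_self_of_subset_left hXM]
          have h2 : insert e X ∩ N.E = {e} := by
            rw [Set.insert_inter_of_mem heN, interN_eq_empty hdisj hXM]
            simp
          rw [FP_rk_formula hdisj (Set.insert_subset (Set.mem_union_right _ heN) hXE),
            FP_rk_of_subset_M hdisj hXM, h1, h2]
          have h3 : M.rk X < M.rk M.E := hflat.rk_lt hne
          have h4 : ({e} : Set α).ncard = 1 := Set.ncard_singleton e
          omega
      · intro e he
        obtain ⟨C, hC, hCX, heC⟩ := hcyc e he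
        exact ⟨C, FP_circuit_of_M hdisj hC, hCX, heC⟩
    · -- M.E ∪ Y for Y a nonempty cyclic flat of N
      have hYN : Y ⊆ N.E := hflat.subset_ground
      have hXE : M.E ∪ Y ⊆ M.E ∪ N.E := Set.union_subset_union Set.Subset.rfl hYN
      obtain ⟨y, hy⟩ := Set.nonempty_iff_ne_empty.2 hYne
      obtain ⟨Cy, hCy, hCyY, hyCy⟩ := hcyc y hy
      constructor
      · rw [flat_iff_rk (M := FP M N hdisj) (FP_E (hdisj := hdisj) ▸ hXE)]
        rintro e ⟨heE, heX⟩
        rw [FP_E (hdisj := hdisj)] at heE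
        have heN : e ∈ N.E := by
          rcases heE with h | h
          · exact absurd (Set.mem_union_left _ h) heX
          · exact h
        have heY : e ∉ Y := fun h => heX (Set.mem_union_right _ h)
        have h1 : insert e (M.E ∪ Y) = M.E ∪ insert e Y := by
          rw [Set.union_insert]
        rw [h1, FP_rk_union hdisj (Set.insert_subset heN hYN), FP_rk_union hdisj hYN]
        have := (flat_iff_rk hYN).1 hflat e ⟨heN, heY⟩
        omega
      · rintro e (heM | heY)
        · by_cases hei : M.Indep {e}
          · obtain ⟨B₀, hB₀, heB₀⟩ := hei.exists_isBase_superset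
            refine ⟨B₀ ∪ Cy, FP_circuit_type2 hdisj hB₀.indep
              (hCyY.trans hYN) (fun x hx => hCy.mem_closure_diff_singleton hx)
              hCy.1.nonempty ?_, Set.union_subset_union hB₀.subset_ground hCyY,
              Set.mem_union_left _ (heB₀ rfl)⟩
            rw [← base_rk hB₀, hCy.ncard_eq]
            omega
          · exact ⟨{e}, FP_circuit_of_M hdisj (singleton_circuit_of_dep heM hei),
              Set.singleton_subset_iff.2 (Set.mem_union_left _ heM),
              rfl⟩
        · obtain ⟨C, hC, hCY, heC⟩ := hcyc e heY
          obtain ⟨B₀, hB₀⟩ := M.exists_isBase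
          refine ⟨B₀ ∪ C, FP_circuit_type2 hdisj hB₀.indep (hCY.trans hYN)
            (fun x hx => hC.mem_closure_diff_singleton hx) hC.1.nonempty ?_,
            Set.union_subset_union hB₀.subset_ground hCY,
            Set.mem_union_right _ heC⟩
          rw [← base_rk hB₀, hC.ncard_eq]
          omega
    · -- ground set of M
      have hXE : M.E ⊆ M.E ∪ N.E := Set.subset_union_left
      constructor
      · rw [flat_iff_rk (M := FP M N hdisj) (FP_E (hdisj := hdisj) ▸ hXE)]
        rintro e ⟨heE, heX⟩
        rw [FP_E (hdisj := hdisj)] at heE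
        have heN : e ∈ N.E := heE.resolve_left heX
        have hei : N.Indep {e} := (exists_base_mem_iff heN).1 (hlfree e heN)
        have h1 : insert e M.E = M.E ∪ {e} := by rw [Set.union_singleton]
        rw [h1, FP_rk_union hdisj (Set.singleton_subset_iff.2 heN),
          FP_rk_of_subset_M hdisj Set.Subset.rfl, hei.rk_eq, Set.ncard_singleton]
        omega
      · intro e he
        have hcl := (exists_base_not_mem_iff he).1 (hcfree e he)
        obtain ⟨C, hC, hCsub, heC⟩ :=
          exists_circuit_of_mem_closure Set.Subset.rfl he hcl
        exact ⟨C, FP_circuit_of_M hdisj hC, hCsub, heC⟩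

end Matroid


/-- The free product via cyclic flats: for finite matroids `M`, `N` on disjoint ground sets,
there is a matroid `P` on `E(M) ∪ E(N)` whose cyclic flats are exactly the proper cyclic
flats of `M`, the sets `E(M) ∪ Y` for nonempty cyclic flats `Y` of `N`, together with `E(M)`
itself when `M` has no coloops and `N` has no loops; with ranks `r_M X`, `r_M E(M) + r_N Y`,
and `r_M E(M)` respectively. -/
theorem exists_free_product {α : Type*} (M N : Matroid α) [M.Finite] [N.Finite]
    (hdisj : Disjoint M.E N.E) :
    ∃ P : Matroid α, P.E = M.E ∪ N.E ∧
      {X : Set α | P.CyclicFlat X} =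
        ({X : Set α | M.CyclicFlat X ∧ X ≠ M.E} ∪
          {W : Set α | ∃ Y : Set α, N.CyclicFlat Y ∧ Y ≠ ∅ ∧ W = M.E ∪ Y}) ∪
        {W : Set α | W = M.E ∧ (∀ e ∈ M.E, ∃ B, M.IsBase B ∧ e ∉ B) ∧
          (∀ e ∈ N.E, ∃ B, N.IsBase B ∧ e ∈ B)} ∧
      (∀ X : Set α, M.CyclicFlat X → X ≠ M.E → P.rk X = M.rk X) ∧
      (((∀ e ∈ M.E, ∃ B, M.IsBase B ∧ e ∉ B) ∧ (∀ e ∈ N.E, ∃ B, N.IsBase B ∧ e ∈ B)) →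
        P.rk M.E = M.rk M.E) ∧
      (∀ Y : Set α, N.CyclicFlat Y → Y ≠ ∅ → P.rk (M.E ∪ Y) = M.rk M.E + N.rk Y) := by
  classical
  refine ⟨Matroid.FP M N hdisj, Matroid.FP_E, ?_, ?_, ?_, ?_⟩
  · ext X
    simp only [Set.mem_setOf_eq, Set.mem_union]
    rw [Matroid.FP_cyclicFlat_iff hdisj X]
    exact or_assoc.symm
  · intro X hX hne
    exact Matroid.FP_rk_of_subset_M hdisj hX.1.subset_ground
  · intro _
    exact Matroid.FP_rk_of_subset_M hdisj Set.Subset.rfl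
  · intro Y hY hne
    exact Matroid.FP_rk_union hdisj hY.1.subset_ground
end

section
/- Let M and N be finite matroids on disjoint ground sets, and let P be a matroid on E(M) ∪ E(N) whose rank function satisfies r_P(X ∪ Y) = r_M(X) + r_N(Y) + min{ r_M(E(M)) − r_M(X), |Y| − r_N(Y) } for all X ⊆ E(M) and Y ⊆ E(N) (the free product M □ N). For nonnegative integers i, j let a_{ij} be the number of sets X ⊆ E(M) with r_M(E(M)) − r_M(X) = i and |X| − r_M(X) = j, and for nonnegative integers k, l let b_{kl} be the number of sets Y ⊆ E(N) with r_N(E(N)) − r_N(Y) = k and |Y| − r_N(Y) = l. Then r_P(E(P)) = r_M(E(M)) + r_N(E(N)), and for all nonnegative integers p, q, the number of sets A ⊆ E(M) ∪ E(N) with r_P(E(P)) − r_P(A) = p and |A| − r_P(A) = q equals the sum of a_{ij}·b_{kl} over all nonnegative integers i, j, k, l satisfying i + k − min{i, l} = p and j + l − min{i, l} = q. -/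
private lemma rkAux_le {α : Type*} (M : Matroid α) {X : Set α} (hX : X.Finite) :
    M.rk X ≤ X.ncard := by
  refine csSup_le ⟨0, ∅, M.empty_indep, Set.empty_subset _, Set.ncard_empty α⟩ ?_
  rintro n ⟨I, hI, hIX, rfl⟩
  exact Set.ncard_le_ncard hIX hX

private lemma rkAux_mono {α : Type*} (M : Matroid α) {X Y : Set α} (hXY : X ⊆ Y)
    (hY : Y.Finite) : M.rk X ≤ M.rk Y := by
  apply csSup_le_csSup
  · exact ⟨Y.ncard, by rintro n ⟨I, hI, hIY, rfl⟩; exact Set.ncard_le_ncard hIY hY⟩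
  · exact ⟨0, ∅, M.empty_indep, Set.empty_subset _, Set.ncard_empty α⟩
  · rintro n ⟨I, hI, hIX, rfl⟩; exact ⟨I, hI, hIX.trans hXY, rfl⟩

private lemma ncardProd {α β : Type*} (s : Set α) (t : Set β) :
    (s ×ˢ t).ncard = s.ncard * t.ncard := by
  rw [← Nat.card_coe_set_eq, ← Nat.card_coe_set_eq, ← Nat.card_coe_set_eq,
    Nat.card_congr (Equiv.Set.prod s t), Nat.card_prod]

private noncomputable def cnt {α : Type*} (Q : Matroid α) (i j : ℕ) : ℕ :=
  {X : Set α | X ⊆ Q.E ∧ (Q.rk Q.E : ℤ) - (Q.rk X : ℤ) = i ∧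
    (X.ncard : ℤ) - (Q.rk X : ℤ) = j}.ncard

private lemma cnt_ne_zero {α : Type*} {Q : Matroid α} (hE : Q.E.Finite) {i j : ℕ}
    (h : cnt Q i j ≠ 0) : i ≤ Q.rk Q.E ∧ j ≤ Q.E.ncard := by
  obtain ⟨X, hXE, hXi, hXj⟩ := Set.nonempty_of_ncard_ne_zero h
  have := Set.ncard_le_ncard hXE hE
  omega

private noncomputable def fterm {α : Type*} (M N : Matroid α) (p q i j k l : ℕ) : ℕ :=
  if (i : ℤ) + k - min (i : ℤ) (l : ℤ) = p ∧ (j : ℤ) + l - min (i : ℤ) (l : ℤ) = q then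
    cnt M i j * cnt N k l else 0

private lemma fterm_ne_zero {α : Type*} {M N : Matroid α} (hME : M.E.Finite) (hNE : N.E.Finite)
    {p q i j k l : ℕ} (h : fterm M N p q i j k l ≠ 0) :
    i ≤ M.rk M.E ∧ j ≤ M.E.ncard ∧ k ≤ N.rk N.E ∧ l ≤ N.E.ncard := by
  rw [fterm] at h
  split_ifs at h
  swap
  · exact absurd rfl h
  rw [Nat.mul_ne_zero_iff] at h
  exact ⟨(cnt_ne_zero hME h.1).1, (cnt_ne_zero hME h.1).2,
    (cnt_ne_zero hNE h.2).1, (cnt_ne_zero hNE h.2).2⟩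

private lemma finsum4 (f : ℕ → ℕ → ℕ → ℕ → ℕ) (b₁ b₂ b₃ b₄ : ℕ)
    (h : ∀ i j k l, f i j k l ≠ 0 → i ≤ b₁ ∧ j ≤ b₂ ∧ k ≤ b₃ ∧ l ≤ b₄) :
    (∑ᶠ (i : ℕ) (j : ℕ) (k : ℕ) (l : ℕ), f i j k l) =
      ∑ i ∈ Finset.range (b₁+1), ∑ j ∈ Finset.range (b₂+1),
        ∑ k ∈ Finset.range (b₃+1), ∑ l ∈ Finset.range (b₄+1), f i j k l := by
  have e4 : ∀ i j k, (∑ᶠ l, f i j k l) = ∑ l ∈ Finset.range (b₄+1), f i j k l := by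
    intro i j k
    apply finsum_eq_finset_sum_of_support_subset
    intro l hl
    simp only [Finset.coe_range, Set.mem_Iio]
    exact Nat.lt_succ_of_le (h i j k l hl).2.2.2
  have e3 : ∀ i j, (∑ᶠ (k : ℕ) (l : ℕ), f i j k l) =
      ∑ k ∈ Finset.range (b₃+1), ∑ l ∈ Finset.range (b₄+1), f i j k l := by
    intro i j
    rw [finsum_congr fun k => e4 i j k]
    apply finsum_eq_finset_sum_of_support_subset
    intro k hk
    simp only [Function.mem_support] at hk
    obtain ⟨l, _, hl⟩ := Finset.exists_ne_zero_of_sum_ne_zero hk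
    simp only [Finset.coe_range, Set.mem_Iio]
    exact Nat.lt_succ_of_le (h i j k l hl).2.2.1
  have e2 : ∀ i, (∑ᶠ (j : ℕ) (k : ℕ) (l : ℕ), f i j k l) =
      ∑ j ∈ Finset.range (b₂+1), ∑ k ∈ Finset.range (b₃+1),
        ∑ l ∈ Finset.range (b₄+1), f i j k l := by
    intro i
    rw [finsum_congr fun j => e3 i j]
    apply finsum_eq_finset_sum_of_support_subset
    intro j hj
    simp only [Function.mem_support] at hj
    obtain ⟨k, _, hk⟩ := Finset.exists_ne_zero_of_sum_ne_zero hj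
    obtain ⟨l, _, hl⟩ := Finset.exists_ne_zero_of_sum_ne_zero hk
    simp only [Finset.coe_range, Set.mem_Iio]
    exact Nat.lt_succ_of_le (h i j k l hl).2.1
  rw [finsum_congr fun i => e2 i]
  apply finsum_eq_finset_sum_of_support_subset
  intro i hi
  simp only [Function.mem_support] at hi
  obtain ⟨j, _, hj⟩ := Finset.exists_ne_zero_of_sum_ne_zero hi
  obtain ⟨k, _, hk⟩ := Finset.exists_ne_zero_of_sum_ne_zero hj
  obtain ⟨l, _, hl⟩ := Finset.exists_ne_zero_of_sum_ne_zero hk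
  simp only [Finset.coe_range, Set.mem_Iio]
  exact Nat.lt_succ_of_le (h i j k l hl).1

private lemma unionInjOn {α : Type*} {E₁ E₂ : Set α} (hdisj : Disjoint E₁ E₂)
    {s t : Set (Set α)} (hs : ∀ X ∈ s, X ⊆ E₁) (ht : ∀ Y ∈ t, Y ⊆ E₂) :
    Set.InjOn (fun XY : Set α × Set α => XY.1 ∪ XY.2) (s ×ˢ t) := by
  have e : ∀ X Y : Set α, X ⊆ E₁ → Y ⊆ E₂ → (X ∪ Y) ∩ E₁ = X := by
    intro X Y hX hY
    rw [Set.union_inter_distrib_right, Set.inter_eq_self_of_subset_left hX,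
      (hdisj.symm.mono_left hY).inter_eq, Set.union_empty]
  have e2 : ∀ X Y : Set α, X ⊆ E₁ → Y ⊆ E₂ → (X ∪ Y) ∩ E₂ = Y := by
    intro X Y hX hY
    rw [Set.union_inter_distrib_right, (hdisj.mono_left hX).inter_eq,
      Set.inter_eq_self_of_subset_left hY, Set.empty_union]
  rintro ⟨X, Y⟩ hXY ⟨X', Y'⟩ hXY' h
  simp only [Set.mem_prod] at hXY hXY'
  simp only at h
  have h1 : X = X' := by
    rw [← e X Y (hs X hXY.1) (ht Y hXY.2), h, e X' Y' (hs X' hXY'.1) (ht Y' hXY'.2)]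
  have h2 : Y = Y' := by
    rw [← e2 X Y (hs X hXY.1) (ht Y hXY.2), h, e2 X' Y' (hs X' hXY'.1) (ht Y' hXY'.2)]
  simp [h1, h2]

/-- The Whitney rank generating function (hence the Tutte polynomial) of the free product is
determined by those of its factors: with `a i j` and `b k l` the rank-nullity counts of `M`
and `N`, the count of subsets of `E(P)` with corank `p` and nullity `q` is
`∑ a i j * b k l` over `i + k - min i l = p` and `j + l - min i l = q`. -/
theorem free_product_tutte {α : Type*} (M N : Matroid α) [M.Finite] [N.Finite]
    (hdisj : Disjoint M.E N.E) (P : Matroid α) (hPE : P.E = M.E ∪ N.E)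
    (hPr : ∀ X ⊆ M.E, ∀ Y ⊆ N.E,
      (P.rk (X ∪ Y) : ℤ) = (M.rk X : ℤ) + (N.rk Y : ℤ) +
        min ((M.rk M.E : ℤ) - (M.rk X : ℤ)) ((Y.ncard : ℤ) - (N.rk Y : ℤ))) :
    P.rk P.E = M.rk M.E + N.rk N.E ∧
    ∀ p q : ℕ,
      {A : Set α | A ⊆ M.E ∪ N.E ∧ (P.rk P.E : ℤ) - (P.rk A : ℤ) = p ∧
          (A.ncard : ℤ) - (P.rk A : ℤ) = q}.ncard =
        ∑ᶠ (i : ℕ) (j : ℕ) (k : ℕ) (l : ℕ),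
          (if (i : ℤ) + k - min (i : ℤ) (l : ℤ) = p ∧
              (j : ℤ) + l - min (i : ℤ) (l : ℤ) = q then
            {X : Set α | X ⊆ M.E ∧ (M.rk M.E : ℤ) - (M.rk X : ℤ) = i ∧
                (X.ncard : ℤ) - (M.rk X : ℤ) = j}.ncard *
              {Y : Set α | Y ⊆ N.E ∧ (N.rk N.E : ℤ) - (N.rk Y : ℤ) = k ∧
                (Y.ncard : ℤ) - (N.rk Y : ℤ) = l}.ncard
          else 0) := by
  classical
  have hME : M.E.Finite := M.ground_finite
  have hNE : N.E.Finite := N.ground_finite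
  have hNle : N.rk N.E ≤ N.E.ncard := rkAux_le N hNE
  have hPrk : P.rk P.E = M.rk M.E + N.rk N.E := by
    have h0 := hPr M.E subset_rfl N.E subset_rfl
    rw [hPE]
    have h1 : (P.rk (M.E ∪ N.E) : ℤ) = M.rk M.E + N.rk N.E := by omega
    exact_mod_cast h1
  refine ⟨hPrk, fun p q => ?_⟩
  have main : ∀ A : Set α, A ⊆ M.E ∪ N.E →
      (P.rk A : ℤ) = M.rk (A ∩ M.E) + N.rk (A ∩ N.E) +
        min ((M.rk M.E : ℤ) - M.rk (A ∩ M.E)) (((A ∩ N.E).ncard : ℤ) - N.rk (A ∩ N.E)) ∧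
      (A.ncard : ℤ) = (A ∩ M.E).ncard + (A ∩ N.E).ncard := by
    intro A hA
    have hX : A ∩ M.E ⊆ M.E := Set.inter_subset_right
    have hY : A ∩ N.E ⊆ N.E := Set.inter_subset_right
    have hU : (A ∩ M.E) ∪ (A ∩ N.E) = A := by
      rw [← Set.inter_union_distrib_left, Set.inter_eq_self_of_subset_left hA]
    constructor
    · have h := hPr (A ∩ M.E) hX (A ∩ N.E) hY
      rw [hU] at h
      exact h
    · have hc : (A ∩ M.E).ncard + (A ∩ N.E).ncard = A.ncard := by
        rw [← Set.ncard_union_eq (hdisj.mono hX hY) (hME.subset hX) (hNE.subset hY), hU]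
      exact_mod_cast hc.symm
  show {A : Set α | A ⊆ M.E ∪ N.E ∧ (P.rk P.E : ℤ) - (P.rk A : ℤ) = p ∧
          (A.ncard : ℤ) - (P.rk A : ℤ) = q}.ncard =
    ∑ᶠ (i : ℕ) (j : ℕ) (k : ℕ) (l : ℕ), fterm M N p q i j k l
  rw [finsum4 (fterm M N p q) (M.rk M.E) M.E.ncard (N.rk N.E) N.E.ncard
    (fun i j k l h => fterm_ne_zero hME hNE h)]
  have hSfin : {A : Set α | A ⊆ M.E ∪ N.E ∧ (P.rk P.E : ℤ) - (P.rk A : ℤ) = p ∧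
      (A.ncard : ℤ) - (P.rk A : ℤ) = q}.Finite :=
    ((hME.union hNE).finite_subsets).subset (fun A hA => hA.1)
  rw [Set.ncard_eq_toFinset_card _ hSfin]
  have hmaps : ∀ A ∈ hSfin.toFinset,
      (M.rk M.E - M.rk (A ∩ M.E), (A ∩ M.E).ncard - M.rk (A ∩ M.E),
       N.rk N.E - N.rk (A ∩ N.E), (A ∩ N.E).ncard - N.rk (A ∩ N.E)) ∈
      Finset.range (M.rk M.E + 1) ×ˢ (Finset.range (M.E.ncard + 1) ×ˢ
        (Finset.range (N.rk N.E + 1) ×ˢ Finset.range (N.E.ncard + 1))) := by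
    intro A _
    simp only [Finset.mem_product, Finset.mem_range, Nat.lt_succ_iff]
    exact ⟨Nat.sub_le _ _,
      le_trans (Nat.sub_le _ _) (Set.ncard_le_ncard Set.inter_subset_right hME),
      Nat.sub_le _ _,
      le_trans (Nat.sub_le _ _) (Set.ncard_le_ncard Set.inter_subset_right hNE)⟩
  rw [Finset.card_eq_sum_card_fiberwise hmaps]
  simp only [Finset.sum_product]
  refine Finset.sum_congr rfl fun i _ => Finset.sum_congr rfl fun j _ =>
    Finset.sum_congr rfl fun k _ => Finset.sum_congr rfl fun l _ => ?_
  rw [← Set.ncard_coe_finset, Finset.coe_filter]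
  simp only [Set.Finite.mem_toFinset, Set.mem_setOf_eq]
  by_cases hc : ((i : ℤ) + k - min (i : ℤ) (l : ℤ) = p ∧
      (j : ℤ) + l - min (i : ℤ) (l : ℤ) = q)
  · unfold fterm cnt
    rw [if_pos hc]
    rw [← ncardProd, ← Set.ncard_image_of_injOn
      (unionInjOn hdisj (fun X hX => hX.1) (fun Y hY => hY.1))]
    congr 1
    ext A
    simp only [Set.mem_setOf_eq, Set.mem_image, Set.mem_prod, Prod.exists, Prod.mk.injEq]
    constructor
    · rintro ⟨⟨hAG, hp', hq'⟩, h1, h2, h3, h4⟩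
      have hXE : A ∩ M.E ⊆ M.E := Set.inter_subset_right
      have hYE : A ∩ N.E ⊆ N.E := Set.inter_subset_right
      have b1 : M.rk (A ∩ M.E) ≤ M.rk M.E := rkAux_mono M hXE hME
      have b2 : M.rk (A ∩ M.E) ≤ (A ∩ M.E).ncard := rkAux_le M (hME.subset hXE)
      have b3 : N.rk (A ∩ N.E) ≤ N.rk N.E := rkAux_mono N hYE hNE
      have b4 : N.rk (A ∩ N.E) ≤ (A ∩ N.E).ncard := rkAux_le N (hNE.subset hYE)
      refine ⟨A ∩ M.E, A ∩ N.E, ⟨⟨hXE, by omega, by omega⟩, ⟨hYE, by omega, by omega⟩⟩, ?_⟩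
      rw [← Set.inter_union_distrib_left, Set.inter_eq_self_of_subset_left hAG]
    · rintro ⟨X, Y, ⟨⟨hXE, hXi, hXj⟩, ⟨hYE, hYk, hYl⟩⟩, rfl⟩
      have e1 : (X ∪ Y) ∩ M.E = X := by
        rw [Set.union_inter_distrib_right, Set.inter_eq_self_of_subset_left hXE,
          (hdisj.symm.mono_left hYE).inter_eq, Set.union_empty]
      have e2 : (X ∪ Y) ∩ N.E = Y := by
        rw [Set.union_inter_distrib_right, (hdisj.mono_left hXE).inter_eq,
          Set.inter_eq_self_of_subset_left hYE, Set.empty_union]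
      have hAG : X ∪ Y ⊆ M.E ∪ N.E := Set.union_subset_union hXE hYE
      obtain ⟨hm1, hm2⟩ := main (X ∪ Y) hAG
      rw [e1, e2] at hm1 hm2
      rw [e1, e2]
      have b1 : M.rk X ≤ M.rk M.E := rkAux_mono M hXE hME
      have b2 : M.rk X ≤ X.ncard := rkAux_le M (hME.subset hXE)
      have b3 : N.rk Y ≤ N.rk N.E := rkAux_mono N hYE hNE
      have b4 : N.rk Y ≤ Y.ncard := rkAux_le N (hNE.subset hYE)
      exact ⟨⟨hAG, by omega, by omega⟩, by omega, by omega, by omega, by omega⟩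
  · unfold fterm
    rw [if_neg hc]
    convert Set.ncard_empty (Set α)
    ext A
    simp only [Set.mem_setOf_eq, Set.mem_empty_iff_false, iff_false, not_and]
    rintro ⟨hAG, hp', hq'⟩ h1
    simp only [Prod.mk.injEq] at h1
    obtain ⟨h1, h2, h3, h4⟩ := h1
    obtain ⟨hm1, hm2⟩ := main A hAG
    have hXE : A ∩ M.E ⊆ M.E := Set.inter_subset_right
    have hYE : A ∩ N.E ⊆ N.E := Set.inter_subset_right
    have b1 : M.rk (A ∩ M.E) ≤ M.rk M.E := rkAux_mono M hXE hME
    have b2 : M.rk (A ∩ M.E) ≤ (A ∩ M.E).ncard := rkAux_le M (hME.subset hXE)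
    have b3 : N.rk (A ∩ N.E) ≤ N.rk N.E := rkAux_mono N hYE hNE
    have b4 : N.rk (A ∩ N.E) ≤ (A ∩ N.E).ncard := rkAux_le N (hNE.subset hYE)
    exact hc ⟨by omega, by omega⟩
end

section
/- Let k be a positive integer and let M be a finite matroid such that every antichain under inclusion in the set of cyclic flats of M has at most k elements. Then for every minor N of M, every antichain under inclusion in the set of cyclic flats of N has at most k elements. -/
namespace Matroid

variable {α : Type*}

open Set


lemma aux_closure_flat (M : Matroid α) (X : Set α) : M.IsFlat (M.closure X) := by
  rw [closure_def, sInter_eq_iInter]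
  haveI : Nonempty ↑{F : Set α | M.IsFlat F ∧ X ∩ M.E ⊆ F} :=
    ⟨⟨M.E, M.ground_isFlat, inter_subset_right⟩⟩
  exact IsFlat.iInter fun F ↦ F.2.1

lemma aux_flat_of_closure_eq {M : Matroid α} {F : Set α} (h : M.closure F = F) : M.IsFlat F :=
  h ▸ aux_closure_flat M F

lemma aux_isCircuit_of_restrict {M : Matroid α} {R C : Set α} (hR : R ⊆ M.E)
    (h : (M ↾ R).IsCircuit' C) : M.IsCircuit' C := by
  obtain ⟨hdep, hmin⟩ := h
  rw [restrict_dep_iff] at hdep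
  refine ⟨dep_iff.mpr ⟨hdep.1, hdep.2.trans hR⟩, fun D hD => ?_⟩
  exact (restrict_indep_iff.mp (hmin D hD)).1

lemma aux_exists_isCircuit_of_dep (M : Matroid α) [M.Finite] {X : Set α} (hX : M.Dep X) :
    ∃ C, M.IsCircuit' C ∧ C ⊆ X := by
  obtain ⟨n, hn⟩ : ∃ n, X.ncard ≤ n := ⟨_, le_rfl⟩
  induction n generalizing X with
  | zero =>
    have hfin : X.Finite := M.ground_finite.subset hX.subset_ground
    have : X = ∅ := by
      rw [← Set.ncard_eq_zero hfin]; omega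
    exact absurd (this ▸ M.empty_indep) hX.not_indep
  | succ n ih =>
    by_cases h : ∀ D, D ⊂ X → M.Indep D
    · exact ⟨X, ⟨hX, h⟩, Subset.rfl⟩
    · push_neg at h
      obtain ⟨D, hDX, hD⟩ := h
      have hfin : X.Finite := M.ground_finite.subset hX.subset_ground
      have hDdep : M.Dep D := dep_iff.mpr ⟨hD, hDX.subset.trans hX.subset_ground⟩
      obtain ⟨C, hC, hCD⟩ := ih hDdep (by have := Set.ncard_lt_ncard hDX hfin; omega)
      exact ⟨C, hC, hCD.trans hDX.subset⟩

lemma aux_exists_circuit_of_mem_closure (M : Matroid α) [M.Finite] {Z : Set α} {e : α}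
    (hZ : Z ⊆ M.E) (he : e ∈ M.closure Z) (heZ : e ∉ Z) :
    ∃ C, M.IsCircuit' C ∧ C ⊆ insert e Z ∧ e ∈ C := by
  obtain ⟨I, hI⟩ := M.exists_isBasis Z
  have he' : e ∈ M.closure I := by rw [hI.closure_eq_closure]; exact he
  have heI : e ∉ I := fun h => heZ (hI.subset h)
  have hdep : M.Dep (insert e I) := hI.indep.insert_dep_iff.mpr ⟨he', heI⟩
  obtain ⟨C, hC, hCsub⟩ := aux_exists_isCircuit_of_dep M hdep
  refine ⟨C, hC, hCsub.trans (insert_subset_insert hI.subset), ?_⟩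
  by_contra heC
  have hCI : C ⊆ I := fun x hx =>
    ((hCsub hx).resolve_left (by rintro rfl; exact heC hx))
  exact hC.1.not_indep (hI.indep.subset hCI)

lemma aux_restrict_closure (M : Matroid α) {R Z : Set α} (hZR : Z ⊆ R) (hR : R ⊆ M.E) :
    (M ↾ R).closure Z = M.closure Z ∩ R := by
  obtain ⟨I, hI⟩ := M.exists_isBasis Z (hZR.trans hR)
  have hIR : (M ↾ R).IsBasis I Z := (isBasis_restrict_iff hR).mpr ⟨hI, hZR⟩
  rw [← hI.closure_eq_closure, ← hIR.closure_eq_closure]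
  ext x
  rw [mem_inter_iff, hIR.indep.mem_closure_iff', hI.indep.mem_closure_iff',
    restrict_ground_eq, restrict_indep_iff]
  constructor
  · rintro ⟨hxR, h⟩
    exact ⟨⟨hR hxR, fun hind => h ⟨hind, insert_subset hxR (hI.subset.trans hZR)⟩⟩, hxR⟩
  · rintro ⟨⟨hxE, h⟩, hxR⟩
    exact ⟨hxR, fun hind => h hind.1⟩

lemma aux_cyclicFlat_closure_of_restrict (M : Matroid α) [M.Finite] {R Z : Set α} (hR : R ⊆ M.E)
    (h : (M ↾ R).CyclicFlat Z) : M.CyclicFlat (M.closure Z) ∧ M.closure Z ∩ R = Z := by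
  obtain ⟨hflat, hcyc⟩ := h
  have hZR : Z ⊆ R := hflat.subset_ground
  have hZE : Z ⊆ M.E := hZR.trans hR
  have hcl : M.closure Z ∩ R = Z := by
    rw [← aux_restrict_closure M hZR hR, hflat.closure]
  refine ⟨⟨aux_closure_flat M Z, ?_⟩, hcl⟩
  intro e he
  by_cases heZ : e ∈ Z
  · obtain ⟨C, hC, hCZ, heC⟩ := hcyc e heZ
    exact ⟨C, aux_isCircuit_of_restrict hR hC, hCZ.trans (M.subset_closure Z hZE), heC⟩
  · obtain ⟨C, hC, hCZ, heC⟩ := aux_exists_circuit_of_mem_closure M hZE he heZ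
    exact ⟨C, hC, hCZ.trans (insert_subset he (M.subset_closure Z hZE)), heC⟩


lemma aux_fundamental_cocircuit {M : Matroid α} {B : Set α} {e : α} (hB : M.IsBase B)
    (he : e ∈ B) : M✶.IsCircuit' (M.E \ M.closure (B \ {e})) := by
  have heC : e ∈ M.E \ M.closure (B \ {e}) :=
    ⟨hB.subset_ground he, hB.indep.notMem_closure_diff_of_mem he⟩
  constructor
  · rw [dual_dep_iff_forall]
    refine ⟨fun B' hB' => ?_, diff_subset⟩
    by_contra hcon
    rw [not_nonempty_iff_eq_empty] at hcon
    have hB'sub : B' ⊆ M.closure (B \ {e}) := by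
      intro x hx
      by_contra hx'
      exact (notMem_empty x) (hcon ▸ (⟨⟨hB'.subset_ground hx, hx'⟩, hx⟩ : x ∈ (M.E \ M.closure (B \ {e})) ∩ B'))
    have hcl : M.E ⊆ M.closure (B \ {e}) := by
      calc M.E = M.closure B' := hB'.closure_eq.symm
        _ ⊆ M.closure (M.closure (B \ {e})) := M.closure_subset_closure hB'sub
        _ = M.closure (B \ {e}) := M.closure_closure _
    exact (hB.indep.notMem_closure_diff_of_mem he) (hcl (hB.subset_ground he))
  · intro D hD
    obtain ⟨x, hxC, hxD⟩ := exists_of_ssubset hD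
    have hB'' : M.IsBase (insert x (B \ {e})) := by
      by_cases hxe : x = e
      · subst hxe; rwa [insert_diff_singleton, insert_eq_of_mem he]
      · have hxnB : x ∉ B \ {e} := fun h =>
          hxC.2 (M.mem_closure_of_mem h ((diff_subset).trans hB.subset_ground))
        have hxnB' : x ∉ B := fun h => hxnB ⟨h, hxe⟩
        refine hB.exchange_isBase_of_indep hxnB' ?_
        rw [(hB.indep.subset diff_subset).insert_indep_iff_of_notMem hxnB]
        exact ⟨hxC.1, hxC.2⟩
    have hDE : D ⊆ M.E := hD.subset.trans diff_subset
    rw [dual_indep_iff_exists hDE]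
    refine ⟨insert x (B \ {e}), hB'', ?_⟩
    refine disjoint_left.mpr ?_
    rintro y hyD (rfl | hyB)
    · exact hxD hyD
    · exact (hD.subset hyD).2 (M.mem_closure_of_mem hyB (diff_subset.trans hB.subset_ground))

lemma aux_flat_compl_cocircuit {M : Matroid α} {Z : Set α} (hZ : M.IsFlat Z) {e : α}
    (he : e ∈ M.E \ Z) : ∃ C, M✶.IsCircuit' C ∧ C ⊆ M.E \ Z ∧ e ∈ C := by
  obtain ⟨I, hI⟩ := M.exists_isBasis Z hZ.subset_ground
  have heI : e ∉ I := fun h => he.2 (hI.subset h)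
  have hecl : e ∉ M.closure I := by
    rw [hI.closure_eq_closure, hZ.closure]; exact he.2
  have hins : M.Indep (insert e I) := by
    rw [hI.indep.insert_indep_iff_of_notMem heI]; exact ⟨he.1, hecl⟩
  obtain ⟨B, hB, hIB⟩ := hins.exists_isBase_superset
  have heB : e ∈ B := hIB (mem_insert _ _)
  have hIBe : I ⊆ B \ {e} :=
    subset_diff_singleton (fun x hx => hIB (mem_insert_of_mem _ hx)) heI
  have hZcl : Z ⊆ M.closure (B \ {e}) :=
    hI.subset_closure.trans (M.closure_subset_closure hIBe)
  refine ⟨_, aux_fundamental_cocircuit hB heB, fun x hx => ⟨hx.1, fun hz => hx.2 (hZcl hz)⟩,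
    ⟨he.1, hB.indep.notMem_closure_diff_of_mem heB⟩⟩

lemma aux_circuit_cocircuit {M : Matroid α} {C Cs : Set α} {z : α} (hC : M.IsCircuit' C)
    (hCs : M✶.IsCircuit' Cs) (h : C ∩ Cs = {z}) : False := by
  have hzC : z ∈ C := (h.symm ▸ (mem_singleton z) : z ∈ C ∩ Cs).1
  have hzCs : z ∈ Cs := (h.symm ▸ (mem_singleton z) : z ∈ C ∩ Cs).2
  have hCE : C ⊆ M.E := hC.1.subset_ground
  have hCsE : Cs ⊆ M.E := by
    have := hCs.1.subset_ground; rwa [dual_ground] at this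
  have hCz : M.Indep (C \ {z}) := hC.2 _ (diff_singleton_ssubset.mpr hzC)
  have hzcl : z ∈ M.closure (C \ {z}) := by
    rw [hCz.mem_closure_iff]
    left
    rw [insert_diff_singleton, insert_eq_of_mem hzC]
    exact hC.1
  have hcoind : M✶.Indep (Cs \ {z}) := hCs.2 _ (diff_singleton_ssubset.mpr hzCs)
  have hspan : M.Spanning (M.E \ (Cs \ {z})) :=
    (coindep_iff_compl_spanning (diff_subset.trans hCsE)).mp hcoind
  have hsub : C \ {z} ⊆ M.E \ Cs := by
    intro x hx
    refine ⟨hCE hx.1, fun hxCs => hx.2 ?_⟩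
    have : x ∈ C ∩ Cs := ⟨hx.1, hxCs⟩
    rw [h] at this; exact this
  have h1 : z ∈ M.closure (M.E \ Cs) := M.closure_subset_closure hsub hzcl
  have hset : M.E \ (Cs \ {z}) = insert z (M.E \ Cs) := by
    ext x
    simp only [mem_diff, mem_singleton_iff, mem_insert_iff, not_and, not_not]
    constructor
    · rintro ⟨hxE, hx⟩
      by_cases hxCs : x ∈ Cs
      · exact Or.inl (hx hxCs)
      · exact Or.inr ⟨hxE, hxCs⟩
    · rintro (rfl | ⟨hxE, hxCs⟩)
      · exact ⟨hCsE hzCs, fun _ => rfl⟩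
      · exact ⟨hxE, fun hc => absurd hc hxCs⟩
  have h3 : M.Spanning (M.E \ Cs) := by
    rw [spanning_iff_closure_eq diff_subset]
    rw [← closure_insert_eq_of_mem_closure h1, ← hset]
    exact (spanning_iff_closure_eq diff_subset).mp hspan
  have h4 : M.Coindep Cs := by
    have := (spanning_iff_compl_coindep diff_subset).mp h3
    rwa [diff_diff_cancel_left hCsE] at this
  exact hCs.1.not_indep h4.indep

lemma aux_cyclicFlat_dual {M : Matroid α} [M.Finite] {Z : Set α} (h : M.CyclicFlat Z) :
    M✶.CyclicFlat (M.E \ Z) := by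
  obtain ⟨hflat, hcyc⟩ := h
  have hZE : Z ⊆ M.E := hflat.subset_ground
  constructor
  · apply aux_flat_of_closure_eq
    refine subset_antisymm ?_ (M✶.subset_closure _ (by rw [dual_ground]; exact diff_subset))
    intro z hz
    have hzE : z ∈ M.E := by
      have := M✶.closure_subset_ground _ hz; rwa [dual_ground] at this
    by_contra hzD
    have hzZ : z ∈ Z := by
      by_contra hzZ; exact hzD ⟨hzE, hzZ⟩
    obtain ⟨Cs, hCs, hCsub, hzCs⟩ :=
      aux_exists_circuit_of_mem_closure M✶ (by rw [dual_ground]; exact diff_subset) hz hzD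
    obtain ⟨C, hC, hCZ, hzC⟩ := hcyc z hzZ
    refine aux_circuit_cocircuit (z := z) hC hCs ?_
    apply subset_antisymm
    · rintro x ⟨hxC, hxCs⟩
      rcases hCsub hxCs with rfl | hx
      · rfl
      · exact absurd (hCZ hxC) hx.2
    · rintro x rfl
      exact ⟨hzC, hzCs⟩
  · intro e he
    exact aux_flat_compl_cocircuit hflat he

lemma aux_cyclicFlat_of_dual {Q : Matroid α} [Q.Finite] {Z : Set α} (h : Q✶.CyclicFlat Z) :
    Q.CyclicFlat (Q.E \ Z) := by
  haveI : Q✶.Finite := ⟨Q.ground_finite⟩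
  have := aux_cyclicFlat_dual (M := Q✶) h
  rwa [dual_dual, dual_ground] at this

lemma aux_step {P Q : Matroid α} {k : ℕ} (f : Set α → Set α)
    (hCF : ∀ Z, P.CyclicFlat Z → Q.CyclicFlat (f Z))
    (hord : ∀ Z₁ Z₂, P.CyclicFlat Z₁ → P.CyclicFlat Z₂ → f Z₁ ⊆ f Z₂ → Z₁ ⊆ Z₂ ∨ Z₂ ⊆ Z₁)
    (hQ : ∀ A : Set (Set α), (∀ X ∈ A, Q.CyclicFlat X) → IsAntichain (· ⊆ ·) A → A.ncard ≤ k) :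
    ∀ A : Set (Set α), (∀ X ∈ A, P.CyclicFlat X) → IsAntichain (· ⊆ ·) A → A.ncard ≤ k := by
  intro A hA hanti
  have hinj : Set.InjOn f A := by
    intro Z₁ h₁ Z₂ h₂ he
    by_contra hne
    rcases hord Z₁ Z₂ (hA _ h₁) (hA _ h₂) he.le with hs | hs
    · exact hanti h₁ h₂ hne hs
    · exact hanti h₂ h₁ (Ne.symm hne) hs
  have himg : ∀ X ∈ f '' A, Q.CyclicFlat X := by
    rintro _ ⟨Z, hZ, rfl⟩; exact hCF Z (hA _ hZ)
  have hAanti : IsAntichain (· ⊆ ·) (f '' A) := by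
    rintro _ ⟨Z₁, h₁, rfl⟩ _ ⟨Z₂, h₂, rfl⟩ hne hsub
    have hZne : Z₁ ≠ Z₂ := fun hh => hne (by rw [hh])
    rcases hord Z₁ Z₂ (hA _ h₁) (hA _ h₂) hsub with hs | hs
    · exact hanti h₁ h₂ hZne hs
    · exact hanti h₂ h₁ hZne.symm hs
  calc A.ncard = (f '' A).ncard := (Set.ncard_image_of_injOn hinj).symm
    _ ≤ k := hQ _ himg hAanti

/-- Transport the antichain bound across a dualization. -/
lemma aux_bdd_dual {Q : Matroid α} [Q.Finite] {k : ℕ}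
    (hQ : ∀ A : Set (Set α), (∀ X ∈ A, Q.CyclicFlat X) → IsAntichain (· ⊆ ·) A → A.ncard ≤ k) :
    ∀ A : Set (Set α), (∀ X ∈ A, Q✶.CyclicFlat X) → IsAntichain (· ⊆ ·) A → A.ncard ≤ k := by
  refine aux_step (fun Z => Q.E \ Z) (fun Z h => aux_cyclicFlat_of_dual h) ?_ hQ
  intro Z₁ Z₂ h₁ h₂ hsub
  right
  intro x hx
  have hxE : x ∈ Q.E := by
    have := h₂.1.subset_ground hx; rwa [dual_ground] at this
  by_contra hx1
  exact (hsub ⟨hxE, hx1⟩).2 hx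

/-- Transport the antichain bound across a restriction. -/
lemma aux_bdd_restrict {Q : Matroid α} [Q.Finite] {R : Set α} (hR : R ⊆ Q.E) {k : ℕ}
    (hQ : ∀ A : Set (Set α), (∀ X ∈ A, Q.CyclicFlat X) → IsAntichain (· ⊆ ·) A → A.ncard ≤ k) :
    ∀ A : Set (Set α), (∀ X ∈ A, (Q ↾ R).CyclicFlat X) → IsAntichain (· ⊆ ·) A → A.ncard ≤ k := by
  refine aux_step Q.closure
    (fun Z h => (aux_cyclicFlat_closure_of_restrict Q hR h).1) ?_ hQ
  intro Z₁ Z₂ h₁ h₂ hsub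
  left
  have e₁ := (aux_cyclicFlat_closure_of_restrict Q hR h₁).2
  have e₂ := (aux_cyclicFlat_closure_of_restrict Q hR h₂).2
  rw [← e₁, ← e₂]
  exact Set.inter_subset_inter_left R hsub


end Matroid

/-- If every antichain of cyclic flats of a finite matroid `M` has at most `k` elements, then
the same holds for every minor of `M`. -/
theorem cyclicWidth_minor {α : Type*} (M : Matroid α) [M.Finite] (k : ℕ) (hk : 0 < k)
    (h : ∀ A : Set (Set α), (∀ X ∈ A, M.CyclicFlat X) →
      IsAntichain (· ⊆ ·) A → A.ncard ≤ k) :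
    ∀ N : Matroid α, N.IsMinorOf M →
      ∀ A : Set (Set α), (∀ X ∈ A, N.CyclicFlat X) →
        IsAntichain (· ⊆ ·) A → A.ncard ≤ k := by
  rintro N ⟨C, D, rfl⟩ A hA hanti
  haveI hMd : M✶.Finite := ⟨M.ground_finite⟩
  set Q₁ : Matroid α := M✶.restrict (M.E \ C) with hQ₁
  haveI hQ₁fin : Q₁.Finite := ⟨M.ground_finite.subset Set.diff_subset⟩
  haveI hQ₁dfin : Q₁✶.Finite := ⟨Q₁.ground_finite⟩
  have B1 := Matroid.aux_bdd_dual (Q := M) h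
  have B2 := Matroid.aux_bdd_restrict (Q := M✶)
    (R := M.E \ C) (by rw [Matroid.dual_ground]; exact Set.diff_subset) B1
  have B3 := Matroid.aux_bdd_dual (Q := Q₁) B2
  have B4 := Matroid.aux_bdd_restrict (Q := Q₁✶) (R := Q₁✶.E \ D) Set.diff_subset B3
  exact B4 A hA hanti
end

section
/- Let k be a positive integer and let M be a finite matroid of positive rank such that every antichain under inclusion in the set of cyclic flats of M has at most k elements. Then every antichain under inclusion in the set of cyclic flats of the truncation T(M) of M has at most k elements, where T(M) is the matroid on E(M) whose bases are the independent sets of M of size r(M) − 1. -/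
open Set Matroid

/-- Any independent set is at most as large as any base, in a finite matroid. -/
lemma indep_card_le_base_card {α : Type*} (M : Matroid α) [M.Finite] {I B : Set α}
    (hI : M.Indep I) (hB : M.IsBase B) : I.ncard ≤ B.ncard := by
  obtain ⟨B', hB', hIB'⟩ := hI.exists_isBase_superset
  have h1 : I.ncard ≤ B'.ncard :=
    Set.ncard_le_ncard hIB' (M.set_finite B' hB'.subset_ground)
  rwa [hB'.ncard_eq_ncard_of_isBase hB] at h1

/-- In a finite matroid, the custom rank of the ground set equals the size of any base. -/
lemma rk_ground_eq_base_card {α : Type*} (M : Matroid α) [M.Finite] {B : Set α}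
    (hB : M.IsBase B) : M.rk M.E = B.ncard := by
  unfold Matroid.rk
  apply le_antisymm
  · have hne : {n | ∃ I, M.Indep I ∧ I ⊆ M.E ∧ I.ncard = n}.Nonempty :=
      ⟨0, ∅, M.empty_indep, empty_subset _, Set.ncard_empty _⟩
    apply csSup_le hne
    rintro n ⟨I, hI, -, rfl⟩
    exact indep_card_le_base_card M hI hB
  · exact le_csSup ⟨B.ncard, by rintro n ⟨I, hI, -, rfl⟩; exact indep_card_le_base_card M hI hB⟩
      ⟨B, hB.indep, hB.subset_ground, rfl⟩

/-- If every antichain of cyclic flats of a finite matroid `M` of positive rank has at most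
`k` elements, then the same holds for the truncation `T M`, the matroid on `E(M)` whose bases
are the independent sets of `M` of size `r M - 1`. -/
theorem cyclicWidth_truncation {α : Type*} (M : Matroid α) [M.Finite] (k : ℕ) (hk : 0 < k)
    (hrk : 0 < M.rk M.E)
    (h : ∀ A : Set (Set α), (∀ X ∈ A, M.CyclicFlat X) →
      IsAntichain (· ⊆ ·) A → A.ncard ≤ k)
    (T : Matroid α) (hTE : T.E = M.E)
    (hTB : ∀ B : Set α, T.IsBase B ↔ M.Indep B ∧ B.ncard = M.rk M.E - 1) :
    ∀ A : Set (Set α), (∀ X ∈ A, T.CyclicFlat X) →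
      IsAntichain (· ⊆ ·) A → A.ncard ≤ k := by
  set r := M.rk M.E with hr
  -- characterization of independence in T
  have hTI : ∀ I : Set α, T.Indep I ↔ M.Indep I ∧ I.ncard ≤ r - 1 := by
    intro I
    constructor
    · intro hI
      obtain ⟨B, hB, hIB⟩ := hI.exists_isBase_superset
      obtain ⟨hBM, hBcard⟩ := (hTB B).mp hB
      refine ⟨hBM.subset hIB, ?_⟩
      rw [← hBcard]
      exact Set.ncard_le_ncard hIB (M.set_finite B hBM.subset_ground)
    · rintro ⟨hMI, hle⟩
      obtain ⟨B', hB', hIB'⟩ := hMI.exists_isBase_superset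
      have hB'card : B'.ncard = r := (rk_ground_eq_base_card M hB').symm
      obtain ⟨B, hIB, hBB', hBcard⟩ :=
        Set.exists_subsuperset_card_eq hIB' hle (by rw [hB'card]; exact Nat.sub_le r 1)
      have hTbase : T.IsBase B := (hTB B).mpr ⟨hB'.indep.subset hBB', hBcard⟩
      exact hTbase.indep.subset hIB
  -- the key step : a cyclic flat of T other than the ground set is a cyclic flat of M
  have key : ∀ X : Set α, T.CyclicFlat X → X ≠ T.E → M.CyclicFlat X := by
    rintro X ⟨hXF, hXC⟩ hne
    have hXE : X ⊆ M.E := hTE ▸ hXF.subset_ground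
    -- No base of T is contained in X
    have hnb : ∀ B, T.IsBase B → ¬ B ⊆ X := by
      intro B hB hBX
      have h1 : T.closure X = T.E := hB.closure_of_superset hBX
      rw [hXF.closure] at h1
      exact hne h1
    -- M-independent subsets of X are T-independent
    have hIX : ∀ J, M.Indep J → J ⊆ X → T.Indep J := by
      intro J hJ hJX
      rw [hTI]
      refine ⟨hJ, ?_⟩
      by_contra hgt
      push_neg at hgt
      obtain ⟨J', hJ'J, hJ'⟩ := Set.exists_subset_card_eq hgt.le
      exact hnb J' ((hTB J').mpr ⟨hJ.subset hJ'J, hJ'⟩) (hJ'J.trans hJX)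
    obtain ⟨I, hI⟩ := M.exists_isBasis X hXE
    have hTIind : T.Indep I := hIX I hI.indep hI.subset
    -- X is closed in M
    have hMcl : M.closure X = X := by
      apply subset_antisymm _ (M.subset_closure X hXE)
      intro e he
      rw [← hI.closure_eq_closure] at he
      by_contra heX
      have heI : e ∉ I := fun hh => heX (hI.subset hh)
      have hdep : M.Dep (insert e I) := by
        rcases (hI.indep.mem_closure_iff).mp he with hd | hmem
        · exact hd
        · exact absurd hmem heI
      have hTdep : T.Dep (insert e I) := by
        rw [dep_iff, hTE]
        exact ⟨fun hi => hdep.not_indep ((hTI _).mp hi).1, hdep.subset_ground⟩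
      have h1 : e ∈ T.closure I := (hTIind.mem_closure_iff).mpr (Or.inl hTdep)
      have h2 : e ∈ T.closure X := T.closure_subset_closure hI.subset h1
      rw [hXF.closure] at h2
      exact heX h2
    have hMflat : M.IsFlat X := by
      refine ⟨fun I' Y hI'X hI'Y => ?_, hXE⟩
      have h1 : Y ⊆ M.closure Y := M.subset_closure Y hI'Y.subset_ground
      rw [← hI'Y.closure_eq_closure, hI'X.closure_eq_closure, hMcl] at h1
      exact h1
    refine ⟨hMflat, fun e he => ?_⟩
    obtain ⟨C, ⟨hCdep, hCmin⟩, hCX, heC⟩ := hXC e he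
    refine ⟨C, ⟨?_, fun D hD => ((hTI D).mp (hCmin D hD)).1⟩, hCX, heC⟩
    rw [dep_iff]
    exact ⟨fun hi => hCdep.not_indep (hIX C hi hCX), hCX.trans hXE⟩
  intro A hA hanti
  by_cases hE : T.E ∈ A
  · have hsub : A ⊆ {T.E} := by
      intro X hX
      simp only [mem_singleton_iff]
      by_contra hne
      exact hanti hX hE hne (hA X hX).1.subset_ground
    calc A.ncard ≤ ({T.E} : Set (Set α)).ncard :=
          Set.ncard_le_ncard hsub (finite_singleton _)
      _ = 1 := Set.ncard_singleton _
      _ ≤ k := hk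
  · exact h A (fun X hX => key X (hA X hX) (fun h' => hE (h' ▸ hX))) hanti
end

section
/- For every infinite sequence M_0, M_1, M_2, … of finite matroids, each of whose set of cyclic flats is a chain under inclusion (any two cyclic flats are comparable), there exist indices i < j such that M_i is isomorphic to a minor of M_j. That is, the class of nested matroids is well-quasi-ordered by the minor relation. -/
namespace MatroidAux

open Set Matroid

variable {α : Type*} {M : Matroid α} {C X Y I D : Set α} {e : α}

lemma exists_circuit_subset' (hfin : M.E.Finite) :
    ∀ n (D : Set α), M.Dep D → D.ncard = n → ∃ C, (M.Dep C ∧ ∀ D', D' ⊂ C → M.Indep D') ∧ C ⊆ D := by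
  intro n
  induction n using Nat.strong_induction_on with
  | _ n ih =>
    intro D hD hcard
    by_cases h : ∀ D', D' ⊂ D → M.Indep D'
    · exact ⟨D, ⟨hD, h⟩, subset_rfl⟩
    · push_neg at h
      obtain ⟨D', hss, hind⟩ := h
      have hD' : M.Dep D' := dep_iff.2 ⟨hind, hss.subset.trans hD.subset_ground⟩
      have hlt : D'.ncard < n := hcard ▸ Set.ncard_lt_ncard hss (hfin.subset hD.subset_ground)
      obtain ⟨C, hC, hCD⟩ := ih _ hlt D' hD' rfl
      exact ⟨C, hC, hCD.trans hss.subset⟩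

lemma flat_closure' (M : Matroid α) (X : Set α) : M.IsFlat (M.closure X) := by
  rw [closure_def, sInter_eq_iInter]
  have : Nonempty {F // F ∈ {F | M.IsFlat F ∧ X ∩ M.E ⊆ F}} :=
    ⟨⟨M.E, M.ground_isFlat, inter_subset_right⟩⟩
  exact IsFlat.iInter fun F => F.2.1

end MatroidAux

namespace MatroidAux2

open Set Matroid

variable {α : Type*} {M : Matroid α} {C X Y I D : Set α} {e : α}

lemma exists_circuit_subset (hfin : M.E.Finite) (hD : M.Dep D) :
    ∃ C, M.IsCircuit' C ∧ C ⊆ D :=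
  MatroidAux.exists_circuit_subset' hfin D.ncard D hD rfl

lemma IsCircuit.subset_ground (hC : M.IsCircuit' C) : C ⊆ M.E := hC.1.subset_ground

lemma cyclicFlat_closure (hfin : M.E.Finite) (hX : X ⊆ M.E)
    (h : ∀ x ∈ X, ∃ C, M.IsCircuit' C ∧ C ⊆ X ∧ x ∈ C) :
    M.CyclicFlat (M.closure X) := by
  refine ⟨MatroidAux.flat_closure' M X, fun f hf => ?_⟩
  by_cases hfX : f ∈ X
  · obtain ⟨C, hC, hCX, hfC⟩ := h f hfX
    exact ⟨C, hC, hCX.trans (M.subset_closure X hX), hfC⟩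
  · obtain ⟨I, hI⟩ := M.exists_isBasis X hX
    have hfI : f ∈ M.closure I := by rw [hI.closure_eq_closure]; exact hf
    have hfnI : f ∉ I := fun h' => hfX (hI.subset h')
    have hdep : M.Dep (insert f I) := (hI.indep.mem_closure_iff_of_notMem hfnI).1 hfI
    obtain ⟨C, hC, hCsub⟩ := exists_circuit_subset hfin hdep
    have hfC : f ∈ C := by
      by_contra hfC
      have hCI : C ⊆ I := fun x hx => ((hCsub hx).resolve_left (fun h' => hfC (h' ▸ hx)))
      exact (dep_iff.1 hC.1).1 (hI.indep.subset hCI)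
    refine ⟨C, hC, hCsub.trans ?_, hfC⟩
    exact insert_subset hf (hI.subset.trans (M.subset_closure X hX))

lemma restrict_closure_eq' {R : Set α} (hXR : X ⊆ R) (hR : R ⊆ M.E) :
    (M ↾ R).closure X = M.closure X ∩ R := by
  obtain ⟨I, hI⟩ := (M ↾ R).exists_isBasis X (by rwa [restrict_ground_eq])
  have hIM : M.IsBasis I X := ((isBasis_restrict_iff hR).1 hI).1
  rw [← hI.closure_eq_closure, ← hIM.closure_eq_closure]
  ext f
  have hIind : M.Indep I := hIM.indep
  have hIR : (M ↾ R).Indep I := hIind.indep_restrict_of_subset (hIM.subset.trans hXR)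
  rw [mem_inter_iff, hIR.mem_closure_iff', hIind.mem_closure_iff', restrict_ground_eq,
    restrict_indep_iff]
  constructor
  · rintro ⟨hfR, himp⟩
    exact ⟨⟨hR hfR, fun hind => himp ⟨hind, insert_subset hfR (hIM.subset.trans hXR)⟩⟩, hfR⟩
  · rintro ⟨⟨hfE, himp⟩, hfR⟩
    exact ⟨hfR, fun h => himp h.1⟩

lemma restrict_isCircuit_iff {R : Set α} (hR : R ⊆ M.E) :
    (M ↾ R).IsCircuit' C ↔ M.IsCircuit' C ∧ C ⊆ R := by
  unfold Matroid.IsCircuit'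
  simp only [restrict_dep_iff, restrict_indep_iff]
  constructor
  · rintro ⟨⟨hnd, hCR⟩, hmin⟩
    exact ⟨⟨dep_iff.2 ⟨hnd, hCR.trans hR⟩, fun D hD => (hmin D hD).1⟩, hCR⟩
  · rintro ⟨⟨hdep, hmin⟩, hCR⟩
    exact ⟨⟨(dep_iff.1 hdep).1, hCR⟩, fun D hD => ⟨hmin D hD, hD.subset.trans hCR⟩⟩

lemma chain_restrict (hfin : M.E.Finite)
    (hchain : ∀ X Y, M.CyclicFlat X → M.CyclicFlat Y → X ⊆ Y ∨ Y ⊆ X) {R : Set α} (hR : R ⊆ M.E) :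
    ∀ X Y, (M ↾ R).CyclicFlat X → (M ↾ R).CyclicFlat Y → X ⊆ Y ∨ Y ⊆ X := by
  have key : ∀ X, (M ↾ R).CyclicFlat X → M.CyclicFlat (M.closure X) ∧ X = M.closure X ∩ R := by
    intro X hX
    have hXR : X ⊆ R := hX.1.subset_ground
    have hcyc : ∀ x ∈ X, ∃ C, M.IsCircuit' C ∧ C ⊆ X ∧ x ∈ C := by
      intro x hx
      obtain ⟨C, hC, hCX, hxC⟩ := hX.2 x hx
      exact ⟨C, ((restrict_isCircuit_iff hR).1 hC).1, hCX, hxC⟩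
    refine ⟨cyclicFlat_closure hfin (hXR.trans hR) hcyc, ?_⟩
    have h1 : (M ↾ R).closure X = X := hX.1.closure
    rw [restrict_closure_eq' hXR hR] at h1
    exact h1.symm
  intro X Y hX hY
  obtain ⟨hX', hXeq⟩ := key X hX
  obtain ⟨hY', hYeq⟩ := key Y hY
  rcases hchain _ _ hX' hY' with h | h
  · left; rw [hXeq, hYeq]; exact inter_subset_inter_left _ h
  · right; rw [hXeq, hYeq]; exact inter_subset_inter_left _ h

lemma coloop_indep (hfin : M.E.Finite) (hcl : ∀ C, M.IsCircuit' C → e ∉ C)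
    (hI : I ⊆ M.E) (hind : M.Indep (I \ {e})) : M.Indep I := by
  by_contra h
  obtain ⟨C, hC, hCI⟩ := exists_circuit_subset hfin (dep_iff.2 ⟨h, hI⟩)
  exact (dep_iff.1 hC.1).1 (hind.subset (subset_diff_singleton hCI (hcl C hC)))

lemma circuit_diff_singleton_base (hC : M.IsCircuit' C) (hsp : M.Spanning C) (he : e ∈ C) :
    M.IsBase (C \ {e}) := by
  have hind : M.Indep (C \ {e}) := hC.2 _ (Set.sdiff_singleton_ssubset.2 he)
  have hni : e ∉ C \ {e} := by simp
  have hecl : e ∈ M.closure (C \ {e}) := by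
    rw [hind.mem_closure_iff_of_notMem hni, insert_diff_singleton, insert_eq_of_mem he]
    exact hC.1
  have hCcl : C ⊆ M.closure (C \ {e}) := by
    intro x hx
    rcases eq_or_ne x e with rfl | hne
    · exact hecl
    · exact M.subset_closure _ (diff_subset.trans hC.1.subset_ground) ⟨hx, hne⟩
  have hspan : M.Spanning (C \ {e}) := by
    refine ⟨subset_antisymm (closure_subset_ground _ _) ?_, diff_subset.trans hC.1.subset_ground⟩
    rw [← hsp.closure_eq]
    exact closure_subset_closure_of_subset_closure hCcl
  exact hind.isBase_of_spanning hspan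

lemma free_indep_iff (hfin : M.E.Finite) {B₀ : Set α} (hB₀ : M.IsBase B₀)
    (hsp : ∀ C, M.IsCircuit' C → e ∈ C → M.Spanning C)
    (hI : I ⊆ M.E) (he : e ∈ I) :
    M.Indep I ↔ M.Indep (I \ {e}) ∧ I.ncard ≤ B₀.ncard := by
  have hIfin : I.Finite := hfin.subset hI
  constructor
  · intro h
    refine ⟨h.subset diff_subset, ?_⟩
    obtain ⟨B, hB, hIB⟩ := h.exists_isBase_superset
    have h1 : I.ncard ≤ B.ncard := ncard_le_ncard hIB (hfin.subset hB.subset_ground)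
    have h2 : B.ncard = B₀.ncard := by
      rw [Set.ncard_def, hB.encard_eq_encard_of_isBase hB₀, ← Set.ncard_def]
    omega
  · rintro ⟨hind, hcard⟩
    by_contra h
    obtain ⟨C, hC, hCI⟩ := exists_circuit_subset hfin (dep_iff.2 ⟨h, hI⟩)
    have heC : e ∈ C := by
      by_contra heC
      exact (dep_iff.1 hC.1).1 (hind.subset (subset_diff_singleton hCI heC))
    have hbase := circuit_diff_singleton_base hC (hsp C hC heC) heC
    have h2 : (C \ {e}).ncard = B₀.ncard := by
      rw [Set.ncard_def, hbase.encard_eq_encard_of_isBase hB₀, ← Set.ncard_def]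
    have h3 : (C \ {e}).ncard + 1 = C.ncard :=
      Set.ncard_diff_singleton_add_one heC (hfin.subset hC.1.subset_ground)
    have h4 : C.ncard ≤ I.ncard := ncard_le_ncard hCI hIfin
    omega

lemma con_ground (M : Matroid α) (C : Set α) : (M.con C).E = M.E \ C := rfl

lemma del_ground (M : Matroid α) (D : Set α) : (M.del D).E = M.E \ D := rfl

lemma del_indep_iff : (M.del D).Indep I ↔ M.Indep I ∧ I ⊆ M.E \ D := restrict_indep_iff

lemma con_indep_iff (hC : M.Indep C) :
    (M.con C).Indep I ↔ I ⊆ M.E \ C ∧ M.Indep (I ∪ C) := by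
  have hCE : C ⊆ M.E := hC.subset_ground
  have hsub : M.E \ C ⊆ M✶.E := by rw [dual_ground]; exact diff_subset
  rw [Matroid.con, dual_indep_iff_exists', restrict_ground_eq]
  constructor
  · rintro ⟨hIE, B, hB, hdisj⟩
    rw [isBase_restrict_iff hsub] at hB
    have hspEC : M✶.Spanning (M.E \ C) := by
      have h1 : M✶.Coindep C := hC.coindep
      have h2 := h1.compl_spanning
      rwa [dual_ground] at h2
    have hBsp : M✶.Spanning B := ⟨by rw [hB.closure_eq_closure]; exact hspEC.closure_eq,
      hB.indep.subset_ground⟩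
    have hMbase : M.IsBase (M.E \ B) := (hB.indep.isBase_of_spanning hBsp).compl_isBase_of_dual
    refine ⟨hIE, hMbase.indep.subset (union_subset ?_ ?_)⟩
    · exact fun x hx => ⟨(hIE hx).1, fun hxB => (disjoint_left.1 hdisj hx) hxB⟩
    · exact fun x hx => ⟨hCE hx, fun hxB => (hB.subset hxB).2 hx⟩
  · rintro ⟨hIE, hind⟩
    obtain ⟨B₀, hB₀, hsub₀⟩ := hind.exists_isBase_superset
    have hdb : M✶.IsBase (M.E \ B₀) := hB₀.compl_isBase_dual
    refine ⟨hIE, M.E \ B₀, ?_, ?_⟩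
    · rw [isBase_restrict_iff hsub, isBasis_iff_indep_subset_closure]
      refine ⟨hdb.indep, diff_subset_diff_right (subset_union_right.trans hsub₀), ?_⟩
      rw [hdb.closure_eq, dual_ground]
      exact diff_subset
    · exact disjoint_left.2 fun x hxI hxB => hxB.2 (hsub₀ (Or.inl hxI))

end MatroidAux2
open Set

namespace NestedWqo

/-- number of `true`s among the first `k` letters -/
def tcnt (w : List Bool) (k : ℕ) : ℕ := (w.take k).count true

lemma tcnt_eq_card (w : List Bool) (k : ℕ) (hk : k ≤ w.length) :
    tcnt w k = ((Finset.range k).filter (fun m => w.getD m false = true)).card := by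
  induction k with
  | zero => simp [tcnt]
  | succ k ih =>
    have hklt : k < w.length := hk
    have hk' : k ≤ w.length := le_of_lt hklt
    rw [tcnt, List.take_succ, List.count_append, Finset.range_add_one, Finset.filter_insert]
    rw [List.getElem?_eq_getElem hklt]
    have hgd : w.getD k false = w[k] := List.getD_eq_getElem w false hklt
    by_cases hb : w[k] = true
    · rw [if_pos (by rw [hgd, hb]), Finset.card_insert_of_notMem (by simp), ← ih hk']
      simp [tcnt, hb]
    · rw [if_neg (by rw [hgd]; exact hb), ← ih hk']
      simp at hb
      simp [tcnt, hb]

lemma mono_filter_card_iff {n m : ℕ} (φ : Fin n ↪o Fin m) (k : ℕ) (j : Fin n) :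
    (j : ℕ) < (Finset.univ.filter (fun i : Fin n => (φ i : ℕ) < k)).card ↔ (φ j : ℕ) < k := by
  set s := Finset.univ.filter (fun i : Fin n => (φ i : ℕ) < k) with hs
  constructor
  · intro hj
    by_contra hφ
    push_neg at hφ
    have hsub : s ⊆ Finset.univ.filter (fun i : Fin n => i < j) := by
      intro i hi
      simp only [hs, Finset.mem_filter, Finset.mem_univ, true_and] at hi ⊢
      by_contra hij
      push_neg at hij
      have : (φ j : ℕ) ≤ (φ i : ℕ) := by
        exact_mod_cast (φ.le_iff_le.2 hij)
      omega
    have := Finset.card_le_card hsub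
    have hcard : (Finset.univ.filter (fun i : Fin n => i < j)).card = (j : ℕ) := by
      have : Finset.univ.filter (fun i : Fin n => i < j) = Finset.Iio j := by
        ext i; simp
      rw [this, Fin.card_Iio]
    omega
  · intro hφ
    have hsub : Finset.Iic j ⊆ s := by
      intro i hi
      simp only [Finset.mem_Iic] at hi
      simp only [hs, Finset.mem_filter, Finset.mem_univ, true_and]
      have : (φ i : ℕ) ≤ (φ j : ℕ) := by exact_mod_cast (φ.le_iff_le.2 hi)
      omega
    have := Finset.card_le_card hsub
    rw [Fin.card_Iic] at this
    omega

end NestedWqo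

namespace NestedWqo2

open Set Matroid NestedWqo MatroidAux2

variable {α : Type*}

/-- word-indexed independence predicate -/
def WIndep (w : List Bool) (f : α → ℕ) (I : Set α) : Prop :=
  ∀ k ≤ w.length, (I ∩ f ⁻¹' Set.Iio k).ncard ≤ tcnt w k

lemma windep_of_true_positions {w : List Bool} {f : α → ℕ} {I : Set α} (hfin : I.Finite)
    (hinj : Set.InjOn f I) (h : ∀ x ∈ I, w.getD (f x) false = true) : WIndep w f I := by
  intro k hk
  have hsub : f '' (I ∩ f ⁻¹' Set.Iio k) ⊆
      ↑((Finset.range k).filter (fun m => w.getD m false = true)) := by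
    rintro - ⟨x, ⟨hxI, hxk⟩, rfl⟩
    simp only [Finset.coe_filter, Finset.mem_range, mem_setOf_eq]
    exact ⟨hxk, h x hxI⟩
  have h1 : (I ∩ f ⁻¹' Set.Iio k).ncard = (f '' (I ∩ f ⁻¹' Set.Iio k)).ncard :=
    (Set.ncard_image_of_injOn (hinj.mono inter_subset_left)).symm
  rw [tcnt_eq_card w k hk, h1, ← Set.ncard_coe_finset]
  exact Set.ncard_le_ncard hsub (Finset.finite_toSet _)

theorem exists_word :
    ∀ (n : ℕ) (M : Matroid α), M.E.Finite → M.E.ncard = n →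
    (∀ X Y, M.CyclicFlat X → M.CyclicFlat Y → X ⊆ Y ∨ Y ⊆ X) →
    ∃ (w : List Bool) (f : α → ℕ), Set.BijOn f M.E (Set.Iio w.length) ∧
      ∀ I, I ⊆ M.E → (M.Indep I ↔ WIndep w f I) := by
  intro n
  induction n using Nat.strong_induction_on with
  | _ n ih =>
    intro M hfin hcard hchain
    classical
    rcases eq_or_ne n 0 with rfl | hn0
    · -- empty matroid
      have hE : M.E = ∅ := (Set.ncard_eq_zero hfin).1 hcard
      refine ⟨[], fun _ => 0, ?_, ?_⟩
      · refine ⟨?_, ?_, ?_⟩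
        · intro x hx
          rw [hE] at hx
          exact absurd hx (Set.notMem_empty x)
        · intro x hx
          rw [hE] at hx
          exact absurd hx (Set.notMem_empty x)
        · intro m hm
          simp at hm
      · intro I hI
        rw [hE, subset_empty_iff] at hI
        subst hI
        simp only [M.empty_indep, true_iff]
        intro k hk
        simp [tcnt]
    -- nonempty ground set
    have hne : M.E.Nonempty := Set.nonempty_of_ncard_ne_zero (hcard ▸ hn0)
    -- choose the element e
    have hchoice : ∃ e ∈ M.E, ∃ b : Bool,
        (b = true → ∀ C, M.IsCircuit' C → e ∉ C) ∧
        (b = false → ∃ B₀, M.IsBase B₀ ∧ e ∉ B₀ ∧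
          ∀ C, M.IsCircuit' C → e ∈ C → M.Spanning C) := by
      by_cases hA : ∃ e ∈ M.E, ∀ C, M.IsCircuit' C → e ∉ C
      · obtain ⟨e, he, h⟩ := hA
        exact ⟨e, he, true, fun _ => h, fun h' => by simp at h'⟩
      push_neg at hA
      -- every element is in a circuit
      set Fs : Set (Set α) := {F | M.CyclicFlat F ∧ F ≠ M.E} with hFs
      have hFs_fin : Fs.Finite :=
        hfin.finite_subsets.subset (fun F hF => hF.1.1.subset_ground)
      have hex : ∃ e ∈ M.E, ∀ F ∈ Fs, e ∉ F := by
        by_contra hcon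
        push_neg at hcon
        obtain ⟨x, hx⟩ := hne
        obtain ⟨F0, hF0, _⟩ := hcon x hx
        obtain ⟨Fm, hFm, hmax⟩ := hFs_fin.exists_maximal ⟨F0, hF0⟩
        have hsubm : ∀ F ∈ Fs, F ⊆ Fm := by
          intro F hF
          rcases hchain F Fm hF.1 hFm.1 with h | h
          · exact h
          · exact hmax hF h
        have hEFm : M.E ⊆ Fm := by
          intro y hy
          obtain ⟨F, hF, hyF⟩ := hcon y hy
          exact hsubm F hF hyF
        exact hFm.2 (subset_antisymm hFm.1.1.subset_ground hEFm)
      obtain ⟨e, he, hefree⟩ := hex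
      refine ⟨e, he, false, fun h' => by simp at h', fun _ => ?_⟩
      have hspan : ∀ C, M.IsCircuit' C → e ∈ C → M.Spanning C := by
        intro C hC heC
        have hCE : C ⊆ M.E := hC.1.subset_ground
        have hcyc : M.CyclicFlat (M.closure C) :=
          cyclicFlat_closure hfin hCE (fun x hx => ⟨C, hC, subset_rfl, hx⟩)
        have hclE : M.closure C = M.E := by
          by_contra hne'
          exact hefree _ ⟨hcyc, hne'⟩ (M.subset_closure C hCE heC)
        exact ⟨hclE, hCE⟩
      obtain ⟨C₀, hC₀, heC₀⟩ := hA e he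
      exact ⟨C₀ \ {e}, circuit_diff_singleton_base hC₀ (hspan C₀ hC₀ heC₀) heC₀,
        fun h' => h'.2 rfl, hspan⟩
    obtain ⟨e, he, b, hcaset, hcasef⟩ := hchoice
    -- the deletion
    set R : Set α := M.E \ {e} with hR
    have hRE : R ⊆ M.E := diff_subset
    have hRfin : R.Finite := hfin.subset hRE
    have hRcard : R.ncard < n := by
      rw [hR, Set.ncard_diff_singleton_of_mem he]
      omega
    obtain ⟨w', f', hbij', hchar'⟩ := ih R.ncard hRcard (M ↾ R)
      (by rwa [restrict_ground_eq]) (by rw [restrict_ground_eq]) (chain_restrict hfin hchain hRE)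
    rw [restrict_ground_eq] at hbij' hchar'
    set n' := w'.length with hn'
    set f : α → ℕ := fun x => if x = e then n' else f' x with hf
    set w : List Bool := w' ++ [b] with hw
    have hlen : w.length = n' + 1 := by simp [hw, hn']
    have hfe : f e = n' := by simp [hf]
    have hfne : ∀ x, x ≠ e → f x = f' x := fun x hx => by simp [hf, hx]
    -- bijectivity
    have hbij : Set.BijOn f M.E (Set.Iio (n' + 1)) := by
      refine ⟨?_, ?_, ?_⟩
      · intro x hx
        rcases eq_or_ne x e with rfl | hxe
        · simp [hfe]
        · rw [hfne x hxe]
          exact lt_trans (hbij'.mapsTo ⟨hx, hxe⟩) (Nat.lt_succ_self n')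
      · intro x hx y hy hxy
        by_cases hxe : x = e
        · by_cases hye : y = e
          · rw [hxe, hye]
          · rw [hxe, hfe, hfne y hye] at hxy
            exact absurd hxy.symm (Nat.ne_of_lt (hbij'.mapsTo ⟨hy, hye⟩))
        · by_cases hye : y = e
          · rw [hye, hfe, hfne x hxe] at hxy
            exact absurd hxy (Nat.ne_of_lt (hbij'.mapsTo ⟨hx, hxe⟩))
          · exact hbij'.injOn ⟨hx, hxe⟩ ⟨hy, hye⟩ (by rwa [hfne x hxe, hfne y hye] at hxy)
      · intro m hm
        rcases eq_or_ne m n' with rfl | hmn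
        · exact ⟨e, he, hfe⟩
        · have hm' : m ∈ Set.Iio n' := lt_of_le_of_ne (Nat.lt_succ_iff.1 hm) hmn
          obtain ⟨x, hx, hfx⟩ := hbij'.surjOn hm'
          exact ⟨x, hx.1, by rw [hfne x hx.2]; exact hfx⟩
    -- set identities
    have s1 : ∀ (I : Set α) (k : ℕ), k ≤ n' →
        I ∩ f ⁻¹' Set.Iio k = (I \ {e}) ∩ f' ⁻¹' Set.Iio k := by
      intro I k hk
      ext x
      simp only [mem_inter_iff, mem_preimage, mem_Iio, mem_diff, mem_singleton_iff]
      constructor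
      · rintro ⟨hxI, hxk⟩
        have hxe : x ≠ e := by
          rintro rfl
          rw [hfe] at hxk
          omega
        exact ⟨⟨hxI, hxe⟩, by rwa [← hfne x hxe]⟩
      · rintro ⟨⟨hxI, hxe⟩, hxk⟩
        exact ⟨hxI, by rwa [hfne x hxe]⟩
    have s2 : ∀ (I : Set α), I ⊆ M.E → I ∩ f ⁻¹' Set.Iio (n' + 1) = I := by
      intro I hI
      refine inter_eq_left.2 (fun x hx => ?_)
      rcases eq_or_ne x e with rfl | hxe
      · simp [hfe]
      · exact mem_preimage.2 (lt_trans (by rw [hfne x hxe]; exact hbij'.mapsTo ⟨hI hx, hxe⟩)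
          (Nat.lt_succ_self n'))
    have s3 : ∀ k ≤ n', tcnt w k = tcnt w' k := by
      intro k hk
      rw [hw, tcnt, tcnt, List.take_append_of_le_length hk]
    have s4 : tcnt w (n' + 1) = tcnt w' n' + (if b then 1 else 0) := by
      rw [hw, tcnt, List.take_of_length_le (by simp [hn']), List.count_append, tcnt,
        List.take_of_length_le le_rfl]
      cases b <;> simp
    have s5 : ∀ (I : Set α), I ⊆ M.E → (I \ {e}) ∩ f' ⁻¹' Set.Iio n' = I \ {e} := by
      intro I hI
      exact inter_eq_left.2 (fun x hx => hbij'.mapsTo ⟨hI hx.1, hx.2⟩)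
    -- the master translation
    have hstar : ∀ (I : Set α), I ⊆ M.E →
        (WIndep w f I ↔ WIndep w' f' (I \ {e}) ∧
          I.ncard ≤ tcnt w' n' + (if b then 1 else 0)) := by
      intro I hI
      constructor
      · intro hW
        refine ⟨fun k hk => ?_, ?_⟩
        · rw [← s1 I k hk, ← s3 k hk]
          exact hW k (by omega)
        · have := hW (n' + 1) (by omega)
          rwa [s2 I hI, s4] at this
      · rintro ⟨hW', hcard'⟩
        intro k hk
        rw [hlen] at hk
        by_cases hk' : k ≤ n'
        · rw [s1 I k hk', s3 k hk']
          exact hW' k hk'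
        · have : k = n' + 1 := by omega
          subst this
          rwa [s2 I hI, s4]
    -- the two cases
    refine ⟨w, f, by rwa [hlen], ?_⟩
    intro I hI
    have hIe : I \ {e} ⊆ R := fun x hx => ⟨hI hx.1, hx.2⟩
    have hresI : ∀ (J : Set α), J ⊆ R → ((M ↾ R).Indep J ↔ M.Indep J) := by
      intro J hJ
      rw [restrict_indep_iff]
      exact ⟨fun h => h.1, fun h => ⟨h, hJ⟩⟩
    have hIfin : I.Finite := hfin.subset hI
    have hIe_card : I.ncard ≤ (I \ {e}).ncard + 1 := by
      calc I.ncard ≤ (insert e (I \ {e})).ncard :=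
            Set.ncard_le_ncard (fun x hx => by
              rcases eq_or_ne x e with rfl | hxe
              · exact mem_insert _ _
              · exact mem_insert_of_mem _ ⟨hx, hxe⟩) ((hIfin.diff).insert e)
        _ ≤ (I \ {e}).ncard + 1 := Set.ncard_insert_le _ _
    cases b with
    | true =>
      -- coloop case
      have hcoloop := hcaset rfl
      have hMiff : M.Indep I ↔ WIndep w' f' (I \ {e}) := by
        constructor
        · intro h
          exact (hchar' _ hIe).1 ((hresI _ hIe).2 (h.subset diff_subset))
        · intro h
          exact coloop_indep hfin hcoloop hI ((hresI _ hIe).1 ((hchar' _ hIe).2 h))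
      rw [hMiff, hstar I hI]
      simp only [if_true]
      refine ⟨fun h => ⟨h, ?_⟩, fun h => h.1⟩
      have h1 := h n' le_rfl
      rw [s5 I hI] at h1
      omega
    | false =>
      -- free case
      obtain ⟨B₀, hB₀, heB₀, hspan⟩ := hcasef rfl
      have hB₀R : B₀ ⊆ R := fun x hx => ⟨hB₀.subset_ground hx, fun h' => heB₀ (h' ▸ hx)⟩
      have h2 : B₀.ncard ≤ tcnt w' n' := by
        have h1 : WIndep w' f' B₀ := (hchar' _ hB₀R).1 ((hresI _ hB₀R).2 hB₀.indep)
        have := h1 n' le_rfl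
        rwa [Set.inter_eq_left.2
          (show B₀ ⊆ f' ⁻¹' Set.Iio n' from fun x hx => hbij'.mapsTo (hB₀R hx))] at this
      have htB₀ : B₀.ncard = tcnt w' n' := by
        set T : Set α := R ∩ f' ⁻¹' {m | w'.getD m false = true} with hT
        have hTfin : T.Finite := hRfin.subset inter_subset_left
        have hTW : WIndep w' f' T := windep_of_true_positions hTfin
          (hbij'.injOn.mono inter_subset_left) (fun x hx => hx.2)
        have hTind : M.Indep T := (hresI _ inter_subset_left).1 ((hchar' _ inter_subset_left).2 hTW)
        have hTcard : T.ncard = tcnt w' n' := by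
          have himg : f' '' T = ↑((Finset.range n').filter (fun m => w'.getD m false = true)) := by
            apply subset_antisymm
            · rintro - ⟨x, hx, rfl⟩
              simp only [Finset.coe_filter, Finset.mem_range, mem_setOf_eq]
              exact ⟨hbij'.mapsTo hx.1, hx.2⟩
            · rintro m hm
              simp only [Finset.coe_filter, Finset.mem_range, mem_setOf_eq] at hm
              obtain ⟨x, hxR, rfl⟩ := hbij'.surjOn (show m ∈ Set.Iio n' from hm.1)
              exact ⟨x, ⟨hxR, hm.2⟩, rfl⟩
          rw [tcnt_eq_card w' n' le_rfl, ← Set.ncard_coe_finset, ← himg,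
            Set.ncard_image_of_injOn (hbij'.injOn.mono inter_subset_left)]
        have h3 : T.ncard ≤ B₀.ncard := by
          obtain ⟨B₁, hB₁, hTB₁⟩ := hTind.exists_isBase_superset
          have hle := Set.ncard_le_ncard hTB₁ (hfin.subset hB₁.subset_ground)
          have heq : B₁.ncard = B₀.ncard := by
            rw [Set.ncard_def, hB₁.encard_eq_encard_of_isBase hB₀, ← Set.ncard_def]
          omega
        omega
      rw [hstar I hI]
      simp only [Bool.false_eq_true, if_false, add_zero]
      by_cases heI : e ∈ I
      · have hfree := free_indep_iff hfin hB₀ hspan hI heI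
        have hdiff_iff : M.Indep (I \ {e}) ↔ WIndep w' f' (I \ {e}) :=
          (hresI _ hIe).symm.trans (hchar' _ hIe)
        rw [hfree, hdiff_iff, htB₀]
      · rw [diff_singleton_eq_self heI] at hIe ⊢
        have hMiff : M.Indep I ↔ WIndep w' f' I := (hresI _ hIe).symm.trans (hchar' _ hIe)
        rw [hMiff]
        refine ⟨fun h => ⟨h, ?_⟩, fun h => h.1⟩
        have h1 := h n' le_rfl
        rwa [Set.inter_eq_left.2
          (show I ⊆ f' ⁻¹' Set.Iio n' from fun x hx => hbij'.mapsTo (hIe hx))] at h1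

end NestedWqo2

namespace NestedWqo3

open Set Matroid NestedWqo MatroidAux2 NestedWqo2

variable {γ : Type*}

theorem minor_of_sublist (P : Matroid γ) (hfin : P.E.Finite)
    {w w' : List Bool} {f : γ → ℕ} (hbij : Set.BijOn f P.E (Set.Iio w.length))
    (hchar : ∀ I, I ⊆ P.E → (P.Indep I ↔ WIndep w f I))
    (hsub : List.Sublist w' w) :
    ∃ (C D : Set γ) (g : γ → ℕ),
      Set.BijOn g ((P.con C).del D).E (Set.Iio w'.length) ∧
      ∀ I, I ⊆ ((P.con C).del D).E → (((P.con C).del D).Indep I ↔ WIndep w' g I) := by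
  classical
  set n : ℕ := w.length with hn
  set n'' : ℕ := w'.length with hn''
  obtain ⟨φ, hφ⟩ := List.sublist_iff_exists_fin_orderEmbedding_get_eq.1 hsub
  set ranφ : Set ℕ := Set.range (fun i : Fin n'' => (φ i : ℕ)) with hranφ
  have hφval_inj : Function.Injective (fun i : Fin n'' => (φ i : ℕ)) :=
    fun i j hij => φ.injective (Fin.val_injective hij)
  have hgetφ : ∀ i : Fin n'', w.getD (φ i : ℕ) false = w'.getD (i : ℕ) false := by
    intro i
    rw [List.getD_eq_get w false (φ i), List.getD_eq_get w' false i]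
    exact (hφ i).symm
  set C : Set γ := {x | x ∈ P.E ∧ f x ∉ ranφ ∧ w.getD (f x) false = true} with hC
  set D : Set γ := {x | x ∈ P.E ∧ f x ∉ ranφ ∧ w.getD (f x) false ≠ true} with hD
  set S : Set γ := {x | x ∈ P.E ∧ f x ∈ ranφ} with hS
  have hmemran : ∀ m, m ∈ ranφ ↔ ∃ i : Fin n'', (φ i : ℕ) = m := fun m => Iff.rfl
  have hmemC : ∀ x, x ∈ C ↔ (x ∈ P.E ∧ f x ∉ ranφ ∧ w.getD (f x) false = true) :=
    fun x => Iff.rfl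
  have hmemD : ∀ x, x ∈ D ↔ (x ∈ P.E ∧ f x ∉ ranφ ∧ w.getD (f x) false ≠ true) :=
    fun x => Iff.rfl
  have hmemS : ∀ x, x ∈ S ↔ (x ∈ P.E ∧ f x ∈ ranφ) := fun x => Iff.rfl
  have hCE : C ⊆ P.E := fun x hx => ((hmemC x).1 hx).1
  have hCfin : C.Finite := hfin.subset hCE
  have hSE : S ⊆ P.E := fun x hx => ((hmemS x).1 hx).1
  have hNE : ((P.con C).del D).E = S := by
    rw [del_ground, con_ground]
    ext x
    rw [Set.mem_diff, Set.mem_diff, hmemC, hmemD, hmemS]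
    by_cases hxE : x ∈ P.E <;> by_cases hr : f x ∈ ranφ <;>
      by_cases ht : w.getD (f x) false = true <;> tauto
  -- the relabelling function
  set g : γ → ℕ := fun x => if h : ∃ i : Fin n'', (φ i : ℕ) = f x then (h.choose : ℕ) else 0
    with hg
  have hgspec : ∀ x ∈ S, ∃ i : Fin n'', (φ i : ℕ) = f x ∧ g x = (i : ℕ) := by
    intro x hx
    have h : ∃ i : Fin n'', (φ i : ℕ) = f x := (hmemran (f x)).1 ((hmemS x).1 hx).2
    exact ⟨h.choose, h.choose_spec, by simp only [hg]; rw [dif_pos h]⟩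
  -- counting functions
  set K : ℕ → ℕ := fun k => (Finset.univ.filter (fun i : Fin n'' => (φ i : ℕ) < k)).card
    with hK
  have hKdef : ∀ k, K k = (Finset.univ.filter (fun i : Fin n'' => (φ i : ℕ) < k)).card :=
    fun _ => rfl
  have hKle : ∀ k, K k ≤ n'' := by
    intro k
    rw [hKdef]
    calc (Finset.univ.filter (fun i : Fin n'' => (φ i : ℕ) < k)).card
        ≤ Finset.univ.card := Finset.card_filter_le _ _
      _ = n'' := by simp
  have hkey : ∀ (k : ℕ) (j : Fin n''), (j : ℕ) < K k ↔ (φ j : ℕ) < k :=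
    fun k j => NestedWqo.mono_filter_card_iff φ k j
  set A : ℕ → ℕ := fun k => (C ∩ f ⁻¹' Set.Iio k).ncard with hA
  have hAdef : ∀ k, A k = (C ∩ f ⁻¹' Set.Iio k).ncard := fun _ => rfl
  have tsplit : ∀ k, k ≤ n → tcnt w k = tcnt w' (K k) + A k := by
    intro k hk
    rw [tcnt_eq_card w k hk]
    set s₀ := (Finset.range k).filter (fun m => w.getD m false = true) with hs₀
    have hsplit := Finset.card_filter_add_card_filter_not
      (s := s₀) (p := fun m => m ∈ ranφ)
    have h1 : (s₀.filter (fun m => m ∈ ranφ)).card = tcnt w' (K k) := by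
      have e1 : s₀.filter (fun m => m ∈ ranφ) =
          (Finset.univ.filter (fun i : Fin n'' => (φ i : ℕ) < k ∧ w'.getD (i : ℕ) false = true)).image
            (fun i : Fin n'' => (φ i : ℕ)) := by
        ext m
        simp only [hs₀, Finset.mem_filter, Finset.mem_range, Finset.mem_image, Finset.mem_univ,
          true_and]
        constructor
        · rintro ⟨⟨hmk, hmt⟩, i, rfl⟩
          exact ⟨i, ⟨hmk, by rw [← hgetφ i]; exact hmt⟩, rfl⟩
        · rintro ⟨i, ⟨hik, hit⟩, rfl⟩
          exact ⟨⟨hik, by rw [hgetφ i]; exact hit⟩, ⟨i, rfl⟩⟩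
      have e2 : (Finset.range (K k)).filter (fun m => w'.getD m false = true) =
          (Finset.univ.filter (fun i : Fin n'' => (φ i : ℕ) < k ∧ w'.getD (i : ℕ) false = true)).image
            (fun i : Fin n'' => (i : ℕ)) := by
        ext m
        simp only [Finset.mem_filter, Finset.mem_range, Finset.mem_image, Finset.mem_univ, true_and]
        constructor
        · rintro ⟨hmK, hmt⟩
          refine ⟨⟨m, lt_of_lt_of_le hmK (hKle k)⟩, ⟨?_, hmt⟩, rfl⟩
          exact (hkey k ⟨m, lt_of_lt_of_le hmK (hKle k)⟩).1 hmK
        · rintro ⟨i, ⟨hik, hit⟩, rfl⟩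
          exact ⟨(hkey k i).2 hik, hit⟩
      rw [tcnt_eq_card w' (K k) (hKle k), e1, e2,
        Finset.card_image_of_injective _ hφval_inj,
        Finset.card_image_of_injective _ Fin.val_injective]
    have h2 : (s₀.filter (fun m => m ∉ ranφ)).card = A k := by
      have himg : f '' (C ∩ f ⁻¹' Set.Iio k) = ↑(s₀.filter (fun m => m ∉ ranφ)) := by
        ext m
        simp only [hs₀, Finset.coe_filter, Finset.mem_filter, Finset.mem_range, mem_setOf_eq,
          mem_image, mem_inter_iff, mem_preimage, mem_Iio]
        constructor
        · rintro ⟨x, ⟨hxC, hxk⟩, rfl⟩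
          obtain ⟨hxE, hxr, hxt⟩ := (hmemC x).1 hxC
          exact ⟨⟨hxk, hxt⟩, hxr⟩
        · rintro ⟨⟨hmk, hmt⟩, hmr⟩
          obtain ⟨x, hxE, rfl⟩ := hbij.surjOn (show m ∈ Set.Iio n from lt_of_lt_of_le hmk hk)
          exact ⟨x, ⟨(hmemC x).2 ⟨hxE, hmr, hmt⟩, hmk⟩, rfl⟩
      rw [hAdef]
      rw [← Set.ncard_image_of_injOn (hbij.injOn.mono (inter_subset_left.trans hCE)), himg,
        Set.ncard_coe_finset]
    omega
  have hKchoice : ∀ k', k' ≤ n'' → ∃ k, k ≤ n ∧ K k = k' := by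
    intro k' hk'
    rcases Nat.eq_zero_or_pos k' with rfl | hpos
    · refine ⟨0, Nat.zero_le n, ?_⟩
      rw [hKdef]
      simp
    · have hj : k' - 1 < n'' := by omega
      set j : Fin n'' := ⟨k' - 1, hj⟩ with hjdef
      refine ⟨(φ j : ℕ) + 1, (φ j).isLt, ?_⟩
      have e3 : Finset.univ.filter (fun i : Fin n'' => (φ i : ℕ) < (φ j : ℕ) + 1) =
          Finset.Iic j := by
        ext i
        simp only [Finset.mem_filter, Finset.mem_univ, true_and, Finset.mem_Iic,
          Nat.lt_succ_iff]
        rw [← Fin.le_def, ← φ.le_iff_le]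
      rw [hKdef, e3, Fin.card_Iic]
      show k' - 1 + 1 = k'
      omega
  -- independence of C
  have hCind : P.Indep C := by
    refine (hchar C hCE).2 (windep_of_true_positions hCfin (hbij.injOn.mono hCE) ?_)
    exact fun x hx => ((hmemC x).1 hx).2.2
  -- membership translation
  have isplit : ∀ (I : Set γ), I ⊆ S → ∀ k, I ∩ f ⁻¹' Set.Iio k = I ∩ g ⁻¹' Set.Iio (K k) := by
    intro I hI k
    ext x
    simp only [mem_inter_iff, mem_preimage, mem_Iio, and_congr_right_iff]
    intro hxI
    obtain ⟨i, hi, hgi⟩ := hgspec x (hI hxI)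
    rw [← hi, hgi]
    exact (hkey k i).symm
  have usplit : ∀ (I : Set γ), I ⊆ S → ∀ k,
      ((I ∪ C) ∩ f ⁻¹' Set.Iio k).ncard = (I ∩ f ⁻¹' Set.Iio k).ncard + A k := by
    intro I hI k
    rw [union_inter_distrib_right, hA]
    simp only
    apply Set.ncard_union_eq
    · refine Set.disjoint_left.2 fun x hx₁ hx₂ => ?_
      exact ((hmemC x).1 hx₂.1).2.1 ((hmemS x).1 (hI hx₁.1)).2
    · exact (hfin.subset (hI.trans hSE)).subset inter_subset_left
    · exact (hfin.subset hCE).subset inter_subset_left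
  refine ⟨C, D, g, ?_, ?_⟩
  · -- bijectivity of g on the minor's ground set
    rw [hNE]
    refine ⟨?_, ?_, ?_⟩
    · intro x hx
      obtain ⟨i, _, hgi⟩ := hgspec x hx
      rw [hgi]
      exact i.isLt
    · intro x hx y hy hxy
      obtain ⟨i, hi, hgi⟩ := hgspec x hx
      obtain ⟨i', hi', hgi'⟩ := hgspec y hy
      apply hbij.injOn (hSE hx) (hSE hy)
      have hvv : (i : ℕ) = (i' : ℕ) := by rw [← hgi, ← hgi', hxy]
      rw [← hi, ← hi', Fin.val_injective hvv]
    · intro m hm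
      have hmn : (φ ⟨m, hm⟩ : ℕ) ∈ Set.Iio n := (φ ⟨m, hm⟩).isLt
      obtain ⟨x, hxE, hfx⟩ := hbij.surjOn hmn
      have hxS : x ∈ S := (hmemS x).2 ⟨hxE, (hmemran (f x)).2 ⟨⟨m, hm⟩, hfx.symm⟩⟩
      refine ⟨x, hxS, ?_⟩
      obtain ⟨i, hi, hgi⟩ := hgspec x hxS
      rw [hgi]
      have : i = ⟨m, hm⟩ := hφval_inj (show (φ i : ℕ) = (φ ⟨m, hm⟩ : ℕ) by rw [hi, hfx])
      rw [this]
  · -- independence characterization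
    intro I hI
    rw [hNE] at hI
    have hIfC : I ∪ C ⊆ P.E := union_subset (hI.trans hSE) hCE
    have step1 : ((P.con C).del D).Indep I ↔ P.Indep (I ∪ C) := by
      rw [del_indep_iff, con_indep_iff hCind, con_ground]
      constructor
      · rintro ⟨⟨_, h⟩, _⟩
        exact h
      · intro h
        refine ⟨⟨fun x hx => ⟨hSE (hI hx),
            fun hxC => ((hmemC x).1 hxC).2.1 ((hmemS x).1 (hI hx)).2⟩, h⟩, ?_⟩
        intro x hx
        refine ⟨⟨hSE (hI hx), fun hxC => ((hmemC x).1 hxC).2.1 ((hmemS x).1 (hI hx)).2⟩,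
          fun hxD => ((hmemD x).1 hxD).2.1 ((hmemS x).1 (hI hx)).2⟩
    rw [step1, hchar _ hIfC]
    constructor
    · intro h k' hk'
      obtain ⟨k, hkn, hKk⟩ := hKchoice k' hk'
      have := h k hkn
      rw [usplit I hI k, isplit I hI k, hKk, tsplit k hkn, hKk] at this
      omega
    · intro h k hk
      have h' := h (K k) (hKle k)
      rw [usplit I hI k, isplit I hI k, tsplit k hk]
      omega

end NestedWqo3

namespace NestedWqo4

open Set Matroid NestedWqo NestedWqo2 NestedWqo3

theorem isoTo_of_windep {γ₁ γ₂ : Type*} (M₁ : Matroid γ₁) (M₂ : Matroid γ₂)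
    {w : List Bool} {f₁ : γ₁ → ℕ} {f₂ : γ₂ → ℕ}
    (hb₁ : Set.BijOn f₁ M₁.E (Set.Iio w.length))
    (hb₂ : Set.BijOn f₂ M₂.E (Set.Iio w.length))
    (hc₁ : ∀ I, I ⊆ M₁.E → (M₁.Indep I ↔ WIndep w f₁ I))
    (hc₂ : ∀ I, I ⊆ M₂.E → (M₂.Indep I ↔ WIndep w f₂ I)) :
    M₁.IsIsoTo M₂ := by
  classical
  set e : ↥M₁.E ≃ ↥M₂.E := (hb₁.equiv f₁).trans (hb₂.equiv f₂).symm with he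
  have hfe : ∀ x : ↥M₁.E, f₂ ((e x) : γ₂) = f₁ (x : γ₁) := by
    intro x
    have h1 : ((hb₁.equiv f₁) x : ℕ) = f₁ (x : γ₁) := rfl
    have h2 : ∀ y : ↥M₂.E, ((hb₂.equiv f₂) y : ℕ) = f₂ (y : γ₂) := fun y => rfl
    have h3 : (hb₂.equiv f₂) ((hb₂.equiv f₂).symm ((hb₁.equiv f₁) x)) = (hb₁.equiv f₁) x :=
      Equiv.apply_symm_apply _ _
    have h4 : f₂ (((hb₂.equiv f₂).symm ((hb₁.equiv f₁) x) : ↥M₂.E) : γ₂) = f₁ (x : γ₁) := by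
      rw [← h2, h3, h1]
    exact h4
  refine ⟨e, fun I => ?_⟩
  have hsub₁ : Subtype.val '' I ⊆ M₁.E := Subtype.coe_image_subset _ _
  have hsub₂ : Subtype.val '' (e '' I) ⊆ M₂.E := Subtype.coe_image_subset _ _
  rw [hc₁ _ hsub₁, hc₂ _ hsub₂]
  have key : ∀ k : ℕ, ((Subtype.val '' I) ∩ f₁ ⁻¹' Set.Iio k).ncard =
      ((Subtype.val '' (e '' I)) ∩ f₂ ⁻¹' Set.Iio k).ncard := by
    intro k
    set A : Set ↥M₁.E := {x | x ∈ I ∧ f₁ (x : γ₁) < k} with hA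
    have h1 : (Subtype.val '' I) ∩ f₁ ⁻¹' Set.Iio k = Subtype.val '' A := by
      ext y
      constructor
      · rintro ⟨⟨x, hxI, rfl⟩, hy⟩
        exact ⟨x, ⟨hxI, hy⟩, rfl⟩
      · rintro ⟨x, ⟨hxI, hx⟩, rfl⟩
        exact ⟨⟨x, hxI, rfl⟩, hx⟩
    have h2 : (Subtype.val '' (e '' I)) ∩ f₂ ⁻¹' Set.Iio k = Subtype.val '' (e '' A) := by
      ext y
      constructor
      · rintro ⟨⟨z, ⟨x, hxI, rfl⟩, rfl⟩, hy⟩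
        refine ⟨e x, ⟨x, ⟨hxI, ?_⟩, rfl⟩, rfl⟩
        rw [mem_preimage, mem_Iio, hfe x] at hy
        exact hy
      · rintro ⟨z, ⟨x, ⟨hxI, hx⟩, rfl⟩, rfl⟩
        refine ⟨⟨e x, ⟨x, hxI, rfl⟩, rfl⟩, ?_⟩
        rw [mem_preimage, mem_Iio, hfe x]
        exact hx
    rw [h1, h2, Set.ncard_image_of_injective _ Subtype.val_injective,
      Set.ncard_image_of_injective _ Subtype.val_injective,
      Set.ncard_image_of_injective _ e.injective]
  constructor
  · intro hW k hk
    rw [← key k]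
    exact hW k hk
  · intro hW k hk
    rw [key k]
    exact hW k hk

end NestedWqo4

/-- Nested matroids (finite matroids whose cyclic flats form a chain) are well-quasi-ordered
by the minor relation: in any infinite sequence of them, some earlier term is isomorphic to a
minor of a later term. -/
theorem nested_matroids_wqo (α : ℕ → Type) (M : ∀ n, Matroid (α n))
    (hfin : ∀ n, (M n).Finite)
    (hchain : ∀ n, ∀ X Y : Set (α n),
      (M n).CyclicFlat X → (M n).CyclicFlat Y → X ⊆ Y ∨ Y ⊆ X) :
    ∃ i j, i < j ∧ ∃ N : Matroid (α j), N.IsMinorOf (M j) ∧ (M i).IsIsoTo N := by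
  classical
  have h : ∀ n, ∃ (w : List Bool) (f : α n → ℕ),
      Set.BijOn f (M n).E (Set.Iio w.length) ∧
      ∀ I, I ⊆ (M n).E → ((M n).Indep I ↔ NestedWqo2.WIndep w f I) := fun n =>
    NestedWqo2.exists_word ((M n).E.ncard) (M n) (hfin n).ground_finite rfl (hchain n)
  choose w f hbij hchar using h
  haveI : IsRefl Bool (· = ·) := ⟨fun _ => rfl⟩
  haveI : IsTrans Bool (· = ·) := ⟨fun _ _ _ h1 h2 => h1.trans h2⟩
  have hpwo : (Set.univ : Set Bool).PartiallyWellOrderedOn (· = ·) :=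
    Set.Finite.partiallyWellOrderedOn Set.finite_univ
  have hlist := hpwo.partiallyWellOrderedOn_sublistForall₂ (r := (· = ·))
  obtain ⟨i, j, hij, hsf⟩ := hlist.exists_lt (f := w) (fun n x _ => Set.mem_univ x)
  have hsub : List.Sublist (w i) (w j) := by
    obtain ⟨l, hforall, hsl⟩ := List.sublistForall₂_iff.1 hsf
    have : w i = l := by rw [← List.forall₂_eq_eq_eq]; exact hforall
    rwa [this]
  obtain ⟨C, D, g, hgbij, hgchar⟩ := NestedWqo3.minor_of_sublist (M j)
    (hfin j).ground_finite (hbij j) (hchar j) hsub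
  exact ⟨i, j, hij, ((M j).con C).del D, ⟨C, D, rfl⟩,
    NestedWqo4.isoTo_of_windep _ _ (hbij i) hgbij (hchar i) hgchar⟩
end
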